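/- arXiv:1811.01652 — 5 statements merged into one kernel-verified Lean document; each statement's English description precedes it below -/
import Mathlib

section
/- Let X be a nontrivial real Banach space and let n ≥ 2 be an integer. Then C̄_NJ^{(n)}(X) ≤ C̄_NJ^{(n+1)}(X) and C̲_NJ^{(n+1)}(X) ≤ C̲_NJ^{(n)}(X). -/
open Finset MeasureTheory

noncomputable def njRatio {X : Type*} [NormedAddCommGroup X] [NormedSpace ℝ X]
    {m : ℕ} (x0 : X) (y : Fin m → X) : ℝ :=
  (∑ ε : Fin m → Bool, ‖x0 + ∑ j, (if ε j then (1 : ℝ) else -1) • y j‖ ^ 2) /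
    (2 ^ m * (‖x0‖ ^ 2 + ∑ j, ‖y j‖ ^ 2))

noncomputable def upperNJ (X : Type*) [NormedAddCommGroup X] [NormedSpace ℝ X] (n : ℕ) : ℝ :=
  sSup {c : ℝ | ∃ (x0 : X) (y : Fin (n - 1) → X),
    0 < ‖x0‖ ^ 2 + ∑ j, ‖y j‖ ^ 2 ∧ c = njRatio x0 y}

noncomputable def lowerNJ (X : Type*) [NormedAddCommGroup X] [NormedSpace ℝ X] (n : ℕ) : ℝ :=
  sInf {c : ℝ | ∃ (x0 : X) (y : Fin (n - 1) → X),
    0 < ‖x0‖ ^ 2 + ∑ j, ‖y j‖ ^ 2 ∧ c = njRatio x0 y}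

noncomputable def upperMNJ (X : Type*) [NormedAddCommGroup X] [NormedSpace ℝ X] (n : ℕ) : ℝ :=
  sSup {c : ℝ | ∃ (x0 : X) (y : Fin (n - 1) → X),
    ‖x0‖ = 1 ∧ (∀ j, ‖y j‖ = 1) ∧ c = njRatio x0 y}

noncomputable def lowerMNJ (X : Type*) [NormedAddCommGroup X] [NormedSpace ℝ X] (n : ℕ) : ℝ :=
  sInf {c : ℝ | ∃ (x0 : X) (y : Fin (n - 1) → X),
    ‖x0‖ = 1 ∧ (∀ j, ‖y j‖ = 1) ∧ c = njRatio x0 y}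

lemma njRatio_cons_zero {X : Type*} [NormedAddCommGroup X] [NormedSpace ℝ X]
    {m : ℕ} (x0 : X) (y : Fin m → X) :
    njRatio x0 (Fin.cons (0 : X) y) = njRatio x0 y := by
  unfold njRatio
  have hterm : ∀ ε : Fin (m + 1) → Bool,
      ‖x0 + ∑ j : Fin (m + 1), (if ε j then (1 : ℝ) else -1) •
          (Fin.cons (0 : X) y : Fin (m + 1) → X) j‖ ^ 2 =
        ‖x0 + ∑ j : Fin m, (if ε j.succ then (1 : ℝ) else -1) • y j‖ ^ 2 := by
    intro ε
    rw [Fin.sum_univ_succ]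
    simp
  have h2 := Fintype.sum_equiv (Fin.consEquiv fun _ : Fin (m + 1) => Bool)
    (fun p : Bool × (Fin m → Bool) =>
      ‖x0 + ∑ j : Fin m, (if p.2 j then (1 : ℝ) else -1) • y j‖ ^ 2)
    (fun ε : Fin (m + 1) → Bool =>
      ‖x0 + ∑ j : Fin m, (if ε j.succ then (1 : ℝ) else -1) • y j‖ ^ 2)
    (fun p => by simp [Fin.consEquiv])
  have hnum : (∑ ε : Fin (m + 1) → Bool,
      ‖x0 + ∑ j, (if ε j then (1 : ℝ) else -1) •
        (Fin.cons (0 : X) y : Fin (m + 1) → X) j‖ ^ 2) =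
      2 * ∑ ε : Fin m → Bool, ‖x0 + ∑ j, (if ε j then (1 : ℝ) else -1) • y j‖ ^ 2 := by
    simp only [hterm]
    rw [← h2, Fintype.sum_prod_type]
    simp [two_mul]
  have hden : (‖x0‖ ^ 2 + ∑ j, ‖(Fin.cons (0 : X) y : Fin (m + 1) → X) j‖ ^ 2) =
      ‖x0‖ ^ 2 + ∑ j, ‖y j‖ ^ 2 := by
    rw [Fin.sum_univ_succ]; simp
  rw [hnum, hden, pow_succ, mul_comm ((2:ℝ)^m) 2, mul_assoc, mul_div_mul_left _ _ (by norm_num)]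

lemma njRatio_nonneg {X : Type*} [NormedAddCommGroup X] [NormedSpace ℝ X]
    {m : ℕ} (x0 : X) (y : Fin m → X) : 0 ≤ njRatio x0 y := by
  unfold njRatio
  positivity

lemma njRatio_le {X : Type*} [NormedAddCommGroup X] [NormedSpace ℝ X]
    {m : ℕ} (x0 : X) (y : Fin m → X) : njRatio x0 y ≤ m + 1 := by
  unfold njRatio
  rcases le_or_gt (‖x0‖ ^ 2 + ∑ j, ‖y j‖ ^ 2) 0 with h | h
  · have h0 : ‖x0‖ ^ 2 + ∑ j, ‖y j‖ ^ 2 = 0 := le_antisymm h (by positivity)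
    rw [h0]
    simp
    positivity
  · rw [div_le_iff₀ (by positivity)]
    have key : ∀ ε : Fin m → Bool,
        ‖x0 + ∑ j, (if ε j then (1 : ℝ) else -1) • y j‖ ^ 2 ≤
          (m + 1) * (‖x0‖ ^ 2 + ∑ j, ‖y j‖ ^ 2) := by
      intro ε
      have h1 : ‖x0 + ∑ j, (if ε j then (1 : ℝ) else -1) • y j‖ ≤ ‖x0‖ + ∑ j, ‖y j‖ := by
        refine (norm_add_le _ _).trans (add_le_add_right ?_ _)
        refine (norm_sum_le _ _).trans (le_of_eq (Finset.sum_congr rfl fun j _ => ?_))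
        rw [norm_smul]
        rcases Bool.eq_false_or_eq_true (ε j) with hb | hb <;> simp [hb]
      have h2 : (‖x0‖ + ∑ j, ‖y j‖) ^ 2 ≤ (m + 1) * (‖x0‖ ^ 2 + ∑ j, ‖y j‖ ^ 2) := by
        have := sq_sum_le_card_mul_sum_sq (s := (univ : Finset (Fin (m + 1))))
          (f := Fin.cons ‖x0‖ (fun j => ‖y j‖))
        rw [Fin.sum_univ_succ, Fin.sum_univ_succ] at this
        simpa using this
      calc ‖x0 + ∑ j, (if ε j then (1 : ℝ) else -1) • y j‖ ^ 2
          ≤ (‖x0‖ + ∑ j, ‖y j‖) ^ 2 := by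
            apply pow_le_pow_left₀ (norm_nonneg _) h1
        _ ≤ _ := h2
    calc (∑ ε : Fin m → Bool, ‖x0 + ∑ j, (if ε j then (1 : ℝ) else -1) • y j‖ ^ 2)
        ≤ ∑ _ε : Fin m → Bool, (m + 1) * (‖x0‖ ^ 2 + ∑ j, ‖y j‖ ^ 2) :=
          Finset.sum_le_sum fun ε _ => key ε
      _ = (↑m + 1) * (2 ^ m * (‖x0‖ ^ 2 + ∑ j, ‖y j‖ ^ 2)) := by
          rw [Finset.sum_const]
          simp [Fintype.card_fun]
          ring

lemma njRatio_cast {X : Type*} [NormedAddCommGroup X] [NormedSpace ℝ X]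
    {m m' : ℕ} (h : m' = m) (x0 : X) (y : Fin m → X) :
    njRatio x0 (fun i : Fin m' => y (Fin.cast h i)) = njRatio x0 y := by
  subst h; rfl

lemma sum_norm_sq_cast {X : Type*} [NormedAddCommGroup X]
    {m m' : ℕ} (h : m' = m) (y : Fin m → X) :
    (∑ j : Fin m', ‖y (Fin.cast h j)‖ ^ 2) = ∑ j, ‖y j‖ ^ 2 := by
  subst h; rfl

theorem stmt_1 (X : Type*) [NormedAddCommGroup X] [NormedSpace ℝ X] [CompleteSpace X]
    [Nontrivial X] (n : ℕ) (hn : 2 ≤ n) :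
    upperNJ X n ≤ upperNJ X (n + 1) ∧ lowerNJ X (n + 1) ≤ lowerNJ X n := by
  set S : ℕ → Set ℝ := fun k => {c : ℝ | ∃ (x0 : X) (y : Fin (k - 1) → X),
    0 < ‖x0‖ ^ 2 + ∑ j, ‖y j‖ ^ 2 ∧ c = njRatio x0 y} with hS
  obtain ⟨x0, hx0⟩ := exists_ne (0 : X)
  have hx0n : (0:ℝ) < ‖x0‖ ^ 2 := by
    have := norm_pos_iff.mpr hx0
    positivity
  have hne : ∀ k, 2 ≤ k → (S k).Nonempty := by
    intro k hk
    exact ⟨njRatio x0 (fun _ : Fin (k-1) => (0:X)), x0, (fun _ => 0),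
      by simpa using hx0n, rfl⟩
  have hsub : S n ⊆ S (n + 1) := by
    rintro c ⟨z0, y, hpos, rfl⟩
    have hm : n + 1 - 1 = (n - 1) + 1 := by omega
    set y' : Fin (n - 1 + 1) → X := Fin.cons (0:X) y with hy'
    refine ⟨z0, fun i => y' (Fin.cast hm i), ?_, ?_⟩
    · rw [sum_norm_sq_cast hm y', hy', Fin.sum_univ_succ]
      simpa using hpos
    · rw [njRatio_cast hm, hy', njRatio_cons_zero]
  have hbddA : BddAbove (S (n + 1)) := by
    refine ⟨(n + 1 - 1 : ℕ) + 1, ?_⟩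
    rintro c ⟨z0, y, _, rfl⟩
    exact njRatio_le z0 y
  have hbddB : BddBelow (S (n + 1)) := by
    refine ⟨0, ?_⟩
    rintro c ⟨z0, y, _, rfl⟩
    exact njRatio_nonneg z0 y
  constructor
  · exact csSup_le_csSup hbddA (hne n hn) hsub
  · exact csInf_le_csInf hbddB (hne n hn) hsub
end

section
/- Let X be a nontrivial real Banach space with topological dual X* equipped with the operator norm, and let n ≥ 2 be an integer. Then C̲_NJ^{(n)}(X*) ≥ 1 / C̄_NJ^{(n)}(X). -/
open Finset MeasureTheory

namespace NJAux

variable {m : ℕ}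

/-- The sign attached to a boolean choice. -/
def sg (ε : Fin m → Bool) (j : Fin m) : ℝ := if ε j then 1 else -1

lemma flip_flip (ε : Fin m → Bool) (j : Fin m) :
    Function.update (Function.update ε j (!ε j)) j (!(Function.update ε j (!ε j)) j) = ε := by
  funext x
  by_cases hx : x = j
  · subst hx; simp
  · simp [Function.update_of_ne hx]

lemma sum_sg (j : Fin m) : ∑ ε : Fin m → Bool, sg ε j = 0 := by
  refine Finset.sum_ninvolution (fun ε => Function.update ε j (!ε j)) ?_ ?_
    (fun _ => mem_univ _) (fun ε => flip_flip ε j)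
  · intro ε
    simp only [sg, Function.update_self]
    cases ε j <;> norm_num
  · intro ε _ h
    have := congrFun h j
    simp [Function.update_self] at this

lemma sum_sg_mul (j k : Fin m) :
    ∑ ε : Fin m → Bool, sg ε j * sg ε k = if j = k then (2 : ℝ) ^ m else 0 := by
  split_ifs with h
  · subst h
    have h1 : ∀ ε : Fin m → Bool, sg ε j * sg ε j = 1 := by
      intro ε; simp only [sg]; cases ε j <;> norm_num
    simp only [h1, sum_const, card_univ, nsmul_eq_mul, mul_one]
    simp [Fintype.card_fun]
  · refine Finset.sum_ninvolution (fun ε => Function.update ε j (!ε j)) ?_ ?_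
      (fun _ => mem_univ _) (fun ε => flip_flip ε j)
    · intro ε
      have hj : sg (Function.update ε j (!ε j)) j = -sg ε j := by
        simp only [sg, Function.update_self]; cases ε j <;> norm_num
      have hk : sg (Function.update ε j (!ε j)) k = sg ε k := by
        simp [sg, Function.update_of_ne (Ne.symm h)]
      rw [hj, hk]; ring
    · intro ε _ hh
      have := congrFun hh j
      simp [Function.update_self] at this

lemma card_eps : (Finset.univ : Finset (Fin m → Bool)).card = 2 ^ m := by
  simp [Fintype.card_fun]

lemma abs_sg (ε : Fin m → Bool) (j : Fin m) : |sg ε j| = 1 := by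
  simp only [sg]; cases ε j <;> norm_num

variable {X : Type*} [NormedAddCommGroup X] [NormedSpace ℝ X]

lemma sum_pairing (f0 : X →L[ℝ] ℝ) (g : Fin m → X →L[ℝ] ℝ) (x0 : X) (y : Fin m → X) :
    ∑ ε : Fin m → Bool, (f0 + ∑ j, sg ε j • g j) (x0 + ∑ j, sg ε j • y j)
      = 2 ^ m * (f0 x0 + ∑ j, g j (y j)) := by
  have expand : ∀ ε : Fin m → Bool,
      (f0 + ∑ j, sg ε j • g j) (x0 + ∑ j, sg ε j • y j)
        = f0 x0 + (∑ k, sg ε k * f0 (y k)) + (∑ j, sg ε j * g j x0)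
          + ∑ j, ∑ k, (sg ε j * sg ε k) * g j (y k) := by
    intro ε
    have hd : (∑ j, ∑ k, (sg ε j * sg ε k) * g j (y k))
        = ∑ j, ∑ k, sg ε j * (sg ε k * (g k) (y j)) := by
      rw [Finset.sum_comm]
      exact Finset.sum_congr rfl fun j _ => Finset.sum_congr rfl fun k _ => by ring
    rw [hd]
    simp only [ContinuousLinearMap.add_apply, ContinuousLinearMap.sum_apply,
      ContinuousLinearMap.coe_smul', Pi.smul_apply, map_add, map_sum, _root_.map_smul, smul_eq_mul,
      mul_add, Finset.sum_add_distrib, Finset.mul_sum, mul_assoc]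
    ring
  rw [Finset.sum_congr rfl fun ε _ => expand ε]
  rw [Finset.sum_add_distrib, Finset.sum_add_distrib, Finset.sum_add_distrib]
  have h1 : ∑ _ε : Fin m → Bool, f0 x0 = 2 ^ m * f0 x0 := by
    rw [Finset.sum_const, card_univ]
    simp [Fintype.card_fun]
  have h2 : (∑ ε : Fin m → Bool, ∑ k, sg ε k * f0 (y k)) = 0 := by
    rw [Finset.sum_comm]
    simp only [← Finset.sum_mul, sum_sg, zero_mul, Finset.sum_const_zero]
  have h3 : (∑ ε : Fin m → Bool, ∑ j, sg ε j * g j x0) = 0 := by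
    rw [Finset.sum_comm]
    simp only [← Finset.sum_mul, sum_sg, zero_mul, Finset.sum_const_zero]
  have h4 : (∑ ε : Fin m → Bool, ∑ j, ∑ k, (sg ε j * sg ε k) * g j (y k))
      = ∑ j, 2 ^ m * g j (y j) := by
    rw [Finset.sum_comm]
    refine Finset.sum_congr rfl fun j _ => ?_
    rw [Finset.sum_comm]
    simp only [← Finset.sum_mul, sum_sg_mul, ite_mul, zero_mul]
    simp
  rw [h1, h2, h3, h4, ← Finset.mul_sum]
  ring

/-- Near norm-attaining vector. -/
lemma exists_approx (f : X →L[ℝ] ℝ) {δ : ℝ} (hδ : 0 < δ) :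
    ∃ x : X, ‖x‖ ≤ ‖f‖ ∧ ‖f‖ ^ 2 - δ ≤ f x := by
  by_cases hf : ‖f‖ = 0
  · refine ⟨0, by simp, ?_⟩
    simp [hf]
    linarith
  · have hf0 : 0 < ‖f‖ := lt_of_le_of_ne (norm_nonneg f) (Ne.symm hf)
    have hr : max 0 (‖f‖ - δ / ‖f‖) < ‖f‖ :=
      max_lt hf0 (by linarith [div_pos hδ hf0])
    obtain ⟨u, hu1, hu2⟩ := f.exists_lt_apply_of_lt_opNorm hr
    rw [Real.norm_eq_abs] at hu2
    set v : X := if 0 ≤ f u then u else -u with hv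
    have hv1 : ‖v‖ ≤ 1 := by
      rw [hv]; split_ifs <;> simpa using hu1.le
    have hv2 : ‖f‖ - δ / ‖f‖ < f v := by
      have hmax : max 0 (‖f‖ - δ / ‖f‖) < f v := by
        rw [hv]; split_ifs with h
        · rwa [abs_of_nonneg h] at hu2
        · rw [map_neg]; rwa [abs_of_neg (not_le.1 h)] at hu2
      exact (le_max_right _ _).trans_lt hmax
    refine ⟨‖f‖ • v, ?_, ?_⟩
    · rw [norm_smul, Real.norm_eq_abs, abs_of_nonneg hf0.le]
      nlinarith
    · rw [_root_.map_smul, smul_eq_mul]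
      have := mul_lt_mul_of_pos_left hv2 hf0
      rw [mul_sub] at this
      have hdd : ‖f‖ * (δ / ‖f‖) = δ := by field_simp
      nlinarith [this, hdd]

/-- Pointwise bound on each summand of the numerator. -/
lemma term_le (x0 : X) (y : Fin m → X) (ε : Fin m → Bool) :
    ‖x0 + ∑ j, sg ε j • y j‖ ^ 2 ≤ (m + 1) * (‖x0‖ ^ 2 + ∑ j, ‖y j‖ ^ 2) := by
  set w : Fin (m + 1) → ℝ := Fin.cons ‖x0‖ (fun j => ‖y j‖) with hw
  have hsum : ∑ i, w i = ‖x0‖ + ∑ j, ‖y j‖ := by rw [hw, Fin.sum_cons]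
  have hsq : ∑ i, w i ^ 2 = ‖x0‖ ^ 2 + ∑ j, ‖y j‖ ^ 2 := by
    rw [hw, ← Fin.sum_cons (‖x0‖ ^ 2) (fun j => ‖y j‖ ^ 2)]
    exact Fintype.sum_congr _ _ fun i => by
      refine Fin.cases ?_ ?_ i <;> simp
  have h1 : ‖x0 + ∑ j, sg ε j • y j‖ ≤ ∑ i, w i := by
    rw [hsum]
    refine (norm_add_le _ _).trans ?_
    gcongr
    refine (norm_sum_le _ _).trans ?_
    refine Finset.sum_le_sum fun j _ => ?_
    rw [norm_smul, Real.norm_eq_abs, abs_sg, one_mul]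
  have h2 : (∑ i, w i) ^ 2 ≤ (m + 1) * ∑ i, w i ^ 2 := by
    have := sq_sum_le_card_mul_sum_sq (s := (univ : Finset (Fin (m + 1)))) (f := w)
    simpa using this
  have h0 : (0 : ℝ) ≤ ∑ i, w i := le_trans (norm_nonneg _) h1
  calc ‖x0 + ∑ j, sg ε j • y j‖ ^ 2 ≤ (∑ i, w i) ^ 2 := by
        exact pow_le_pow_left₀ (norm_nonneg _) h1 2
    _ ≤ (m + 1) * ∑ i, w i ^ 2 := h2
    _ = (m + 1) * (‖x0‖ ^ 2 + ∑ j, ‖y j‖ ^ 2) := by rw [hsq]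

def njSet (X : Type*) [NormedAddCommGroup X] [NormedSpace ℝ X] (m : ℕ) : Set ℝ :=
  {c : ℝ | ∃ (x0 : X) (y : Fin m → X),
    0 < ‖x0‖ ^ 2 + ∑ j, ‖y j‖ ^ 2 ∧ c = njRatio x0 y}

lemma bddAbove_njSet : BddAbove (njSet X m) := by
  refine ⟨m + 1, fun c hc => ?_⟩
  obtain ⟨x0, y, hpos, rfl⟩ := hc
  rw [njRatio, div_le_iff₀ (by positivity)]
  have : ∑ ε : Fin m → Bool, ‖x0 + ∑ j, (if ε j then (1 : ℝ) else -1) • y j‖ ^ 2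
      ≤ ∑ _ε : Fin m → Bool, (m + 1) * (‖x0‖ ^ 2 + ∑ j, ‖y j‖ ^ 2) :=
    Finset.sum_le_sum fun ε _ => term_le x0 y ε
  refine this.trans ?_
  rw [Finset.sum_const, card_univ]
  simp only [Fintype.card_fun, Fintype.card_bool, Fintype.card_fin, nsmul_eq_mul]
  push_cast
  ring_nf
  exact le_refl _

lemma one_mem_njSet [Nontrivial X] : (1 : ℝ) ∈ njSet X m := by
  obtain ⟨x, hx⟩ := exists_ne (0 : X)
  have hx0 : 0 < ‖x‖ ^ 2 := by have := norm_pos_iff.2 hx; positivity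
  refine ⟨x, 0, by simpa using hx0, ?_⟩
  rw [njRatio]
  simp [hx0.ne']

lemma one_le_sSup_njSet [Nontrivial X] : (1 : ℝ) ≤ sSup (njSet X m) :=
  le_csSup bddAbove_njSet one_mem_njSet

/-- The numerator is controlled by the supremum constant, including the degenerate case. -/
lemma num_le_sSup (x0 : X) (y : Fin m → X) :
    ∑ ε : Fin m → Bool, ‖x0 + ∑ j, sg ε j • y j‖ ^ 2
      ≤ 2 ^ m * sSup (njSet X m) * (‖x0‖ ^ 2 + ∑ j, ‖y j‖ ^ 2) := by
  by_cases hpos : 0 < ‖x0‖ ^ 2 + ∑ j, ‖y j‖ ^ 2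
  · have hmem : njRatio x0 y ∈ njSet X m := ⟨x0, y, hpos, rfl⟩
    have hle : njRatio x0 y ≤ sSup (njSet X m) := le_csSup bddAbove_njSet hmem
    have := mul_le_mul_of_nonneg_right hle (le_of_lt (mul_pos (by positivity : (0:ℝ) < 2 ^ m) hpos))
    rw [njRatio, div_mul_cancel₀] at this
    · calc ∑ ε : Fin m → Bool, ‖x0 + ∑ j, sg ε j • y j‖ ^ 2
          = ∑ ε : Fin m → Bool, ‖x0 + ∑ j, (if ε j then (1 : ℝ) else -1) • y j‖ ^ 2 := rfl
        _ ≤ sSup (njSet X m) * (2 ^ m * (‖x0‖ ^ 2 + ∑ j, ‖y j‖ ^ 2)) := this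
        _ = 2 ^ m * sSup (njSet X m) * (‖x0‖ ^ 2 + ∑ j, ‖y j‖ ^ 2) := by ring
    · positivity
  · push_neg at hpos
    have hzero : ‖x0‖ ^ 2 + ∑ j, ‖y j‖ ^ 2 = 0 := le_antisymm hpos (by positivity)
    have hx0 : x0 = 0 := by
      have : ‖x0‖ ^ 2 = 0 := by
        have h1 : (0:ℝ) ≤ ∑ j, ‖y j‖ ^ 2 := by positivity
        nlinarith [sq_nonneg ‖x0‖]
      simpa using pow_eq_zero_iff (n := 2) (by norm_num) |>.1 this
    have hy : ∀ j, y j = 0 := by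
      intro j
      have h1 : ∑ j, ‖y j‖ ^ 2 = 0 := by
        have : ‖x0‖ ^ 2 = 0 := by rw [hx0]; simp
        linarith [hzero, this]
      have h2 : ‖y j‖ ^ 2 = 0 :=
        le_antisymm (h1 ▸ Finset.single_le_sum (f := fun j => ‖y j‖ ^ 2)
          (fun i _ => by positivity) (mem_univ j)) (by positivity)
      simpa using pow_eq_zero_iff (n := 2) (by norm_num) |>.1 h2
    subst hx0
    simp only [hy, smul_zero, Finset.sum_const_zero, add_zero, norm_zero]
    simp

end NJAux

set_option maxHeartbeats 2000000 in
open NJAux in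
theorem stmt_7 (X : Type*) [NormedAddCommGroup X] [NormedSpace ℝ X] [CompleteSpace X]
    [Nontrivial X] (n : ℕ) (hn : 2 ≤ n) :
    lowerNJ (StrongDual ℝ X) n ≥ 1 / upperNJ X n := by
  classical
  set m := n - 1 with hm
  set C := upperNJ X n with hCdef
  have hCset : C = sSup (njSet X m) := rfl
  have hC1 : (1 : ℝ) ≤ C := hCset ▸ one_le_sSup_njSet
  have hCpos : (0 : ℝ) < C := lt_of_lt_of_le one_pos hC1
  have hset : lowerNJ (StrongDual ℝ X) n = sInf (njSet (StrongDual ℝ X) m) := rfl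
  rw [ge_iff_le, hset]
  refine le_csInf ?_ ?_
  · obtain ⟨x, hx⟩ := exists_ne (0 : X)
    obtain ⟨f, hf1, hf2⟩ := exists_dual_vector ℝ x (norm_ne_zero_iff.2 hx)
    refine ⟨njRatio f (0 : Fin m → StrongDual ℝ X), f, 0, ?_, rfl⟩
    simp [hf1]
  · rintro c ⟨f0, g, hD, rfl⟩
    set D := ‖f0‖ ^ 2 + ∑ j, ‖g j‖ ^ 2 with hDdef
    set N := ∑ ε : Fin m → Bool, ‖f0 + ∑ j, sg ε j • g j‖ ^ 2 with hNdef
    have hN0 : (0 : ℝ) ≤ N := Finset.sum_nonneg fun ε _ => by positivity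
    set q := (2 : ℝ) ^ m with hq
    have hq0 : (0 : ℝ) < q := by positivity
    have claim : ∀ t : ℝ, 0 < t → t < D → (q * t) ^ 2 ≤ N * (q * C * D) := by
      intro t ht0 htD
      set δ := (D - t) / (m + 1) with hδdef
      have hδ : 0 < δ := div_pos (by linarith) (by positivity)
      obtain ⟨x0, hx0n, hx0f⟩ := exists_approx (f0 : X →L[ℝ] ℝ) hδ
      choose y hyn hyf using fun j => exists_approx (g j : X →L[ℝ] ℝ) hδ
      have hsum : t ≤ f0 x0 + ∑ j, g j (y j) := by
        have h1 : ∑ j, (‖g j‖ ^ 2 - δ) ≤ ∑ j, g j (y j) :=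
          Finset.sum_le_sum fun j _ => hyf j
        rw [Finset.sum_sub_distrib, Finset.sum_const, card_univ] at h1
        simp only [Fintype.card_fin, nsmul_eq_mul] at h1
        have hmd : ((m : ℝ) + 1) * δ = D - t := by
          rw [hδdef]; field_simp
        have hmd' : (m : ℝ) * δ = D - t - δ := by nlinarith
        linarith [hx0f, h1]
      have hP1 : q * t ≤ ∑ ε : Fin m → Bool,
          (f0 + ∑ j, sg ε j • g j) (x0 + ∑ j, sg ε j • y j) := by
        rw [sum_pairing (f0 : X →L[ℝ] ℝ) (fun j => (g j : X →L[ℝ] ℝ)) x0 y]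
        have := mul_le_mul_of_nonneg_left hsum hq0.le
        linarith
      have hP2 : ∑ ε : Fin m → Bool,
          (f0 + ∑ j, sg ε j • g j) (x0 + ∑ j, sg ε j • y j)
          ≤ ∑ ε : Fin m → Bool, ‖f0 + ∑ j, sg ε j • g j‖ * ‖x0 + ∑ j, sg ε j • y j‖ := by
        refine Finset.sum_le_sum fun ε _ => ?_
        exact (le_abs_self _).trans
          ((f0 + ∑ j, sg ε j • g j : X →L[ℝ] ℝ).le_opNorm (x0 + ∑ j, sg ε j • y j))
      have hCS : (∑ ε : Fin m → Bool, ‖f0 + ∑ j, sg ε j • g j‖ * ‖x0 + ∑ j, sg ε j • y j‖) ^ 2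
          ≤ N * ∑ ε : Fin m → Bool, ‖x0 + ∑ j, sg ε j • y j‖ ^ 2 := by
        rw [hNdef]
        exact Finset.sum_mul_sq_le_sq_mul_sq _ _ _
      have hNx : ∑ ε : Fin m → Bool, ‖x0 + ∑ j, sg ε j • y j‖ ^ 2
          ≤ q * C * (‖x0‖ ^ 2 + ∑ j, ‖y j‖ ^ 2) := by
        rw [hq, hCset]
        exact num_le_sSup x0 y
      have hDx : ‖x0‖ ^ 2 + ∑ j, ‖y j‖ ^ 2 ≤ D := by
        rw [hDdef]
        refine add_le_add (pow_le_pow_left₀ (norm_nonneg _) hx0n 2) ?_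
        exact Finset.sum_le_sum fun j _ => pow_le_pow_left₀ (norm_nonneg _) (hyn j) 2
      have hqt : (0 : ℝ) ≤ q * t := by positivity
      calc (q * t) ^ 2
          ≤ (∑ ε : Fin m → Bool, ‖f0 + ∑ j, sg ε j • g j‖ * ‖x0 + ∑ j, sg ε j • y j‖) ^ 2 :=
            pow_le_pow_left₀ hqt (hP1.trans hP2) 2
        _ ≤ N * ∑ ε : Fin m → Bool, ‖x0 + ∑ j, sg ε j • y j‖ ^ 2 := hCS
        _ ≤ N * (q * C * (‖x0‖ ^ 2 + ∑ j, ‖y j‖ ^ 2)) := by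
            exact mul_le_mul_of_nonneg_left hNx hN0
        _ ≤ N * (q * C * D) := by
            refine mul_le_mul_of_nonneg_left ?_ hN0
            exact mul_le_mul_of_nonneg_left hDx (by positivity)
    have final : (q * D) ^ 2 ≤ N * (q * C * D) := by
      by_contra hcon
      push_neg at hcon
      set b := N * (q * C * D) / q ^ 2 with hb
      have hb0 : (0 : ℝ) ≤ b := by
        rw [hb]
        have : (0 : ℝ) ≤ N * (q * C * D) := by positivity
        positivity
      have hbD : b < D ^ 2 := by
        rw [hb, div_lt_iff₀ (by positivity)]
        calc N * (q * C * D) < (q * D) ^ 2 := hcon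
          _ = D ^ 2 * q ^ 2 := by ring
      have hsb : Real.sqrt b < D := by
        have := Real.sqrt_lt_sqrt hb0 hbD
        rwa [Real.sqrt_sq hD.le] at this
      set t := (Real.sqrt b + D) / 2 with ht
      have hsb0 : (0 : ℝ) ≤ Real.sqrt b := Real.sqrt_nonneg b
      have ht0 : 0 < t := by
        rw [ht]
        have hD0 : 0 < D := hD
        linarith
      have htD : t < D := by rw [ht]; linarith
      have h1 : (q * t) ^ 2 ≤ N * (q * C * D) := claim t ht0 htD
      have h2 : t ^ 2 ≤ b := by
        rw [hb, le_div_iff₀ (by positivity : (0:ℝ) < q ^ 2)]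
        calc t ^ 2 * q ^ 2 = (q * t) ^ 2 := by ring
          _ ≤ N * (q * C * D) := h1
      have h3 : b < t ^ 2 := by
        have hbt : Real.sqrt b < t := by rw [ht]; linarith
        nlinarith [Real.sq_sqrt hb0]
      linarith
    have hD0 : 0 < D := hD
    have hrat : njRatio f0 g = N / (q * D) := rfl
    rw [hrat, div_le_div_iff₀ hCpos (by positivity : (0:ℝ) < q * D), one_mul]
    have h4 : (q * D) * (q * D) ≤ (N * C) * (q * D) := by nlinarith [final]
    exact le_of_mul_le_mul_right h4 (by positivity)
end

section
/- Let X be a nontrivial real Banach space with topological dual X* equipped with the operator norm, and let n ≥ 2 be an integer. Then C̲_NJ^{(n)}(X) ≥ 1 / C̄_NJ^{(n)}(X*). -/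
open Finset MeasureTheory

section Aux

variable {m : ℕ}

private def flipAt (j : Fin m) : (Fin m → Bool) ≃ (Fin m → Bool) where
  toFun ε := Function.update ε j (!ε j)
  invFun ε := Function.update ε j (!ε j)
  left_inv ε := by
    funext i
    rcases eq_or_ne i j with rfl | h
    · simp
    · simp [Function.update_of_ne h]
  right_inv ε := by
    funext i
    rcases eq_or_ne i j with rfl | h
    · simp
    · simp [Function.update_of_ne h]

private lemma sum_sg_mul_inv (j : Fin m) (c : (Fin m → Bool) → ℝ)
    (hc : ∀ ε, c (flipAt j ε) = c ε) :
    ∑ ε : Fin m → Bool, (if ε j then (1 : ℝ) else -1) * c ε = 0 := by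
  set f : (Fin m → Bool) → ℝ := fun ε => (if ε j then (1 : ℝ) else -1) * c ε with hf
  have key : ∀ ε, f (flipAt j ε) = -f ε := by
    intro ε
    have h1 : (flipAt j ε) j = !ε j := by simp [flipAt]
    simp only [hf, h1, hc]
    cases ε j <;> norm_num
  have h2 : ∑ ε : Fin m → Bool, f (flipAt j ε) = ∑ ε : Fin m → Bool, f ε :=
    Equiv.sum_comp (flipAt j) f
  have h3 : ∑ ε : Fin m → Bool, f (flipAt j ε) = -∑ ε : Fin m → Bool, f ε := by
    rw [Finset.sum_congr rfl fun ε _ => key ε, Finset.sum_neg_distrib]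
  linarith [h2, h3]

private lemma sum_sg_one (j : Fin m) :
    ∑ ε : Fin m → Bool, (if ε j then (1 : ℝ) else -1) = 0 := by
  have := sum_sg_mul_inv j (fun _ => 1) (fun _ => rfl)
  simpa using this

private lemma card_bool_fun : (Finset.univ : Finset (Fin m → Bool)).card = 2 ^ m := by
  rw [Finset.card_univ, Fintype.card_fun]
  simp

private lemma sum_sg_mul (j k : Fin m) :
    ∑ ε : Fin m → Bool, (if ε j then (1 : ℝ) else -1) * (if ε k then (1 : ℝ) else -1)
      = if j = k then (2 : ℝ) ^ m else 0 := by
  rcases eq_or_ne j k with rfl | h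
  · rw [if_pos rfl]
    have h1 : ∀ ε : Fin m → Bool,
        (if ε j then (1 : ℝ) else -1) * (if ε j then (1 : ℝ) else -1) = 1 := by
      intro ε; cases ε j <;> norm_num
    rw [Finset.sum_congr rfl fun ε _ => h1 ε, Finset.sum_const, card_bool_fun]
    simp
  · rw [if_neg h]
    apply sum_sg_mul_inv
    intro ε
    have : (flipAt j ε) k = ε k := by
      simp [flipAt, Function.update_of_ne h.symm]
    rw [this]

private lemma sum_eval {X : Type*} [NormedAddCommGroup X] [NormedSpace ℝ X]
    (x0 : X) (y : Fin m → X) (g0 : StrongDual ℝ X) (g : Fin m → StrongDual ℝ X) :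
    ∑ ε : Fin m → Bool,
      (g0 + ∑ j, (if ε j then (1 : ℝ) else -1) • g j)
        (x0 + ∑ j, (if ε j then (1 : ℝ) else -1) • y j)
      = 2 ^ m * (g0 x0 + ∑ j, g j (y j)) := by
  have expand : ∀ ε : Fin m → Bool,
      (g0 + ∑ j, (if ε j then (1 : ℝ) else -1) • g j)
        (x0 + ∑ j, (if ε j then (1 : ℝ) else -1) • y j)
      = g0 x0 + (∑ k, (if ε k then (1 : ℝ) else -1) * g0 (y k))
        + (∑ j, (if ε j then (1 : ℝ) else -1) * g j x0)
        + ∑ j, ∑ k, ((if ε j then (1 : ℝ) else -1) * (if ε k then (1 : ℝ) else -1))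
            * g j (y k) := by
    intro ε
    have h1 : ∀ h : StrongDual ℝ X,
        h (x0 + ∑ k, (if ε k then (1 : ℝ) else -1) • y k)
        = h x0 + ∑ k, (if ε k then (1 : ℝ) else -1) * h (y k) := by
      intro h
      rw [map_add, map_sum]
      simp only [_root_.map_smul, smul_eq_mul]
    rw [ContinuousLinearMap.add_apply, ContinuousLinearMap.sum_apply, h1]
    have h2 : ∀ j : Fin m,
        ((if ε j then (1 : ℝ) else -1) • g j)
          (x0 + ∑ k, (if ε k then (1 : ℝ) else -1) • y k)
        = (if ε j then (1 : ℝ) else -1) * g j x0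
          + ∑ k, ((if ε j then (1 : ℝ) else -1) * (if ε k then (1 : ℝ) else -1)) * g j (y k) := by
      intro j
      rw [ContinuousLinearMap.smul_apply, smul_eq_mul, h1, mul_add, Finset.mul_sum]
      congr 1
      apply Finset.sum_congr rfl
      intro k _
      ring
    rw [Finset.sum_congr rfl fun j _ => h2 j, Finset.sum_add_distrib]
    ring
  rw [Finset.sum_congr rfl fun ε _ => expand ε]
  rw [Finset.sum_add_distrib, Finset.sum_add_distrib, Finset.sum_add_distrib]
  have t1 : ∑ _ε : Fin m → Bool, g0 x0 = (2 : ℝ) ^ m * g0 x0 := by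
    rw [Finset.sum_const, card_bool_fun]; push_cast; ring
  have t2 : ∑ ε : Fin m → Bool, ∑ k, (if ε k then (1 : ℝ) else -1) * g0 (y k) = 0 := by
    rw [Finset.sum_comm]
    apply Finset.sum_eq_zero; intro k _
    rw [← Finset.sum_mul, sum_sg_one, zero_mul]
  have t3 : ∑ ε : Fin m → Bool, ∑ j, (if ε j then (1 : ℝ) else -1) * g j x0 = 0 := by
    rw [Finset.sum_comm]
    apply Finset.sum_eq_zero; intro j _
    rw [← Finset.sum_mul, sum_sg_one, zero_mul]
  have t4 : ∑ ε : Fin m → Bool, ∑ j, ∑ k,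
      ((if ε j then (1 : ℝ) else -1) * (if ε k then (1 : ℝ) else -1)) * g j (y k)
      = (2 : ℝ) ^ m * ∑ j, g j (y j) := by
    rw [Finset.sum_comm]
    have hj : ∀ j : Fin m, ∑ ε : Fin m → Bool, ∑ k,
        ((if ε j then (1 : ℝ) else -1) * (if ε k then (1 : ℝ) else -1)) * g j (y k)
        = (2 : ℝ) ^ m * g j (y j) := by
      intro j
      rw [Finset.sum_comm]
      have hk : ∀ k : Fin m, ∑ ε : Fin m → Bool,
          ((if ε j then (1 : ℝ) else -1) * (if ε k then (1 : ℝ) else -1)) * g j (y k)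
          = (if j = k then (2 : ℝ) ^ m else 0) * g j (y k) := by
        intro k
        rw [← Finset.sum_mul, sum_sg_mul]
      rw [Finset.sum_congr rfl fun k _ => hk k]
      have : ∀ k : Fin m, (if j = k then (2 : ℝ) ^ m else 0) * g j (y k)
          = if j = k then (2 : ℝ) ^ m * g j (y k) else 0 := by
        intro k; split_ifs <;> simp
      rw [Finset.sum_congr rfl fun k _ => this k, Finset.sum_ite_eq]
      simp
    rw [Finset.sum_congr rfl fun j _ => hj j, ← Finset.mul_sum]
  rw [t1, t2, t3, t4]
  ring

private lemma njRatio_le_card {X : Type*} [NormedAddCommGroup X] [NormedSpace ℝ X]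
    (x0 : X) (y : Fin m → X) : njRatio x0 y ≤ (m : ℝ) + 1 := by
  set S : ℝ := ‖x0‖ ^ 2 + ∑ j, ‖y j‖ ^ 2 with hSdef
  have hS0 : 0 ≤ S := by positivity
  rcases eq_or_lt_of_le hS0 with h | h
  · unfold njRatio
    rw [← hSdef, ← h, mul_zero, div_zero]
    positivity
  · unfold njRatio
    rw [← hSdef, div_le_iff₀ (by positivity)]
    have hterm : ∀ ε : Fin m → Bool,
        ‖x0 + ∑ j, (if ε j then (1 : ℝ) else -1) • y j‖ ^ 2 ≤ ((m : ℝ) + 1) * S := by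
      intro ε
      have h1 : ‖x0 + ∑ j, (if ε j then (1 : ℝ) else -1) • y j‖ ≤ ‖x0‖ + ∑ j, ‖y j‖ := by
        refine (norm_add_le _ _).trans ?_
        gcongr
        refine (norm_sum_le _ _).trans ?_
        apply Finset.sum_le_sum
        intro j _
        rw [norm_smul]
        have : ‖(if ε j then (1 : ℝ) else -1)‖ = 1 := by split_ifs <;> simp
        rw [this, one_mul]
      have h2 : (‖x0‖ + ∑ j, ‖y j‖) ^ 2 ≤ ((m : ℝ) + 1) * S := by
        set f : Fin (m + 1) → ℝ := Fin.cons ‖x0‖ (fun j => ‖y j‖) with hf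
        have hsum : ∑ i, f i = ‖x0‖ + ∑ j, ‖y j‖ := Fin.sum_cons _ _
        have hsq : ∑ i, f i ^ 2 = S := by
          rw [Fin.sum_univ_succ]
          simp [hf, hSdef]
        have hCS := Finset.sum_mul_sq_le_sq_mul_sq Finset.univ f (fun _ => (1 : ℝ))
        simp only [mul_one, one_pow, Finset.sum_const, Finset.card_univ, Fintype.card_fin,
          nsmul_eq_mul] at hCS
        rw [hsum, hsq] at hCS
        calc (‖x0‖ + ∑ j, ‖y j‖) ^ 2 ≤ S * ((m : ℝ) + 1) := by push_cast at hCS ⊢; linarith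
          _ = ((m : ℝ) + 1) * S := by ring
      calc ‖x0 + ∑ j, (if ε j then (1 : ℝ) else -1) • y j‖ ^ 2
          ≤ (‖x0‖ + ∑ j, ‖y j‖) ^ 2 := by
            apply pow_le_pow_left₀ (norm_nonneg _) h1
        _ ≤ ((m : ℝ) + 1) * S := h2
    calc ∑ ε : Fin m → Bool, ‖x0 + ∑ j, (if ε j then (1 : ℝ) else -1) • y j‖ ^ 2
        ≤ ∑ _ε : Fin m → Bool, ((m : ℝ) + 1) * S := Finset.sum_le_sum fun ε _ => hterm ε
      _ = ((m : ℝ) + 1) * (2 ^ m * S) := by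
          rw [Finset.sum_const, card_bool_fun]; push_cast; ring

end Aux

theorem stmt_8 (X : Type*) [NormedAddCommGroup X] [NormedSpace ℝ X] [CompleteSpace X]
    [Nontrivial X] (n : ℕ) (hn : 2 ≤ n) :
    lowerNJ X n ≥ 1 / upperNJ (StrongDual ℝ X) n := by
  classical
  rw [ge_iff_le, lowerNJ]
  apply le_csInf
  · obtain ⟨x0, hx0⟩ := exists_ne (0 : X)
    refine ⟨njRatio x0 (fun _ : Fin (n - 1) => 0), x0, fun _ => 0, ?_, rfl⟩
    have : (0 : ℝ) < ‖x0‖ ^ 2 := by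
      have := norm_pos_iff.mpr hx0
      positivity
    simpa using this
  · rintro c ⟨x0, y, hS, rfl⟩
    set D := StrongDual ℝ X with hD
    obtain ⟨S, hSdef⟩ : ∃ s : ℝ, s = ‖x0‖ ^ 2 + ∑ j, ‖y j‖ ^ 2 := ⟨_, rfl⟩
    rw [← hSdef] at hS
    obtain ⟨f0, hf0n, hf0⟩ := exists_dual_vector' ℝ x0
    choose f hfn hfv using fun j : Fin (n - 1) => exists_dual_vector' ℝ (y j)
    set g0 : D := ‖x0‖ • f0 with hg0def
    set g : Fin (n - 1) → D := fun j => ‖y j‖ • f j with hgdef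
    have hg0 : ‖g0‖ = ‖x0‖ := by
      rw [hg0def, norm_smul, hf0n, Real.norm_eq_abs, abs_of_nonneg (norm_nonneg _), mul_one]
    have hgj : ∀ j, ‖g j‖ = ‖y j‖ := by
      intro j
      rw [hgdef, norm_smul, hfn j, Real.norm_eq_abs, abs_of_nonneg (norm_nonneg _), mul_one]
    have hS' : ‖g0‖ ^ 2 + ∑ j, ‖g j‖ ^ 2 = S := by
      rw [hg0, hSdef]
      congr 1
      exact Finset.sum_congr rfl fun j _ => by rw [hgj j]
    -- abbreviations
    obtain ⟨T, hTdef⟩ : ∃ t : ℝ, t = ∑ ε : Fin (n - 1) → Bool,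
      ‖x0 + ∑ j, (if ε j then (1 : ℝ) else -1) • y j‖ ^ 2 := ⟨_, rfl⟩
    obtain ⟨T', hT'def⟩ : ∃ t : ℝ, t = ∑ ε : Fin (n - 1) → Bool,
      ‖g0 + ∑ j, (if ε j then (1 : ℝ) else -1) • g j‖ ^ 2 := ⟨_, rfl⟩
    have hden : (0 : ℝ) < 2 ^ (n - 1) * S :=
      mul_pos (pow_pos two_pos _) hS
    -- evaluation identity
    have heval : ∑ ε : Fin (n - 1) → Bool,
        (g0 + ∑ j, (if ε j then (1 : ℝ) else -1) • g j)
          (x0 + ∑ j, (if ε j then (1 : ℝ) else -1) • y j) = 2 ^ (n - 1) * S := by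
      rw [sum_eval]
      congr 1
      rw [hSdef]
      congr 1
      · rw [hg0def]
        simp only [ContinuousLinearMap.coe_smul', Pi.smul_apply, smul_eq_mul]
        rw [hf0]
        show ‖x0‖ * ‖x0‖ = ‖x0‖ ^ 2
        ring
      · apply Finset.sum_congr rfl
        intro j _
        rw [hgdef]
        simp only [ContinuousLinearMap.coe_smul', Pi.smul_apply, smul_eq_mul]
        rw [hfv j]
        show ‖y j‖ * ‖y j‖ = ‖y j‖ ^ 2
        ring
    -- pointwise bound and Cauchy–Schwarz
    have hle : 2 ^ (n - 1) * S ≤ ∑ ε : Fin (n - 1) → Bool,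
        ‖g0 + ∑ j, (if ε j then (1 : ℝ) else -1) • g j‖
          * ‖x0 + ∑ j, (if ε j then (1 : ℝ) else -1) • y j‖ := by
      rw [← heval]
      apply Finset.sum_le_sum
      intro ε _
      calc (g0 + ∑ j, (if ε j then (1 : ℝ) else -1) • g j)
            (x0 + ∑ j, (if ε j then (1 : ℝ) else -1) • y j)
          ≤ ‖(g0 + ∑ j, (if ε j then (1 : ℝ) else -1) • g j)
              (x0 + ∑ j, (if ε j then (1 : ℝ) else -1) • y j)‖ := le_abs_self _
        _ ≤ _ := ContinuousLinearMap.le_opNorm _ _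
    have hCS : (∑ ε : Fin (n - 1) → Bool,
        ‖g0 + ∑ j, (if ε j then (1 : ℝ) else -1) • g j‖
          * ‖x0 + ∑ j, (if ε j then (1 : ℝ) else -1) • y j‖) ^ 2 ≤ T' * T := by
      rw [hT'def, hTdef]
      exact Finset.sum_mul_sq_le_sq_mul_sq Finset.univ _ _
    have hkey : (2 ^ (n - 1) * S) ^ 2 ≤ T' * T := by
      calc (2 ^ (n - 1) * S) ^ 2 ≤ (∑ ε : Fin (n - 1) → Bool,
            ‖g0 + ∑ j, (if ε j then (1 : ℝ) else -1) • g j‖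
              * ‖x0 + ∑ j, (if ε j then (1 : ℝ) else -1) • y j‖) ^ 2 :=
          pow_le_pow_left₀ hden.le hle 2
        _ ≤ T' * T := hCS
    -- membership in the dual set
    have hbdd : BddAbove {c : ℝ | ∃ (x0 : D) (y : Fin (n - 1) → D),
        0 < ‖x0‖ ^ 2 + ∑ j, ‖y j‖ ^ 2 ∧ c = njRatio x0 y} := by
      refine ⟨(↑(n - 1) : ℝ) + 1, ?_⟩
      rintro c ⟨a, b, _, rfl⟩
      exact njRatio_le_card a b
    have hmem : njRatio g0 g ∈ {c : ℝ | ∃ (x0 : D) (y : Fin (n - 1) → D),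
        0 < ‖x0‖ ^ 2 + ∑ j, ‖y j‖ ^ 2 ∧ c = njRatio x0 y} := by
      exact ⟨g0, g, by rw [hS']; exact hS, rfl⟩
    have hub : njRatio g0 g ≤ upperNJ D n := le_csSup hbdd hmem
    have hratio : njRatio g0 g = T' / (2 ^ (n - 1) * S) := by
      unfold njRatio
      rw [hS', hT'def]
    have hub' : T' ≤ upperNJ D n * (2 ^ (n - 1) * S) := by
      rw [hratio, div_le_iff₀ hden] at hub
      exact hub
    have hT0 : 0 ≤ T := by
      rw [hTdef]
      exact Finset.sum_nonneg fun ε _ => pow_nonneg (norm_nonneg _) 2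
    have hT'0 : 0 ≤ T' := by
      rw [hT'def]
      exact Finset.sum_nonneg fun ε _ => pow_nonneg (norm_nonneg _) 2
    have hC0 : 0 ≤ upperNJ D n := by
      refine le_trans ?_ hub
      rw [hratio]
      exact div_nonneg hT'0 hden.le
    have hchain : (2 ^ (n - 1) * S) ^ 2 ≤ upperNJ D n * T * (2 ^ (n - 1) * S) := by
      calc (2 ^ (n - 1) * S) ^ 2 ≤ T' * T := hkey
        _ ≤ upperNJ D n * (2 ^ (n - 1) * S) * T := by
            apply mul_le_mul_of_nonneg_right hub' hT0
        _ = upperNJ D n * T * (2 ^ (n - 1) * S) := by ring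
    have hmain : 2 ^ (n - 1) * S ≤ upperNJ D n * T := by
      have := (mul_le_mul_iff_of_pos_right hden).mp (by
        calc (2 ^ (n - 1) * S) * (2 ^ (n - 1) * S) = (2 ^ (n - 1) * S) ^ 2 := by ring
          _ ≤ upperNJ D n * T * (2 ^ (n - 1) * S) := hchain)
      exact this
    have hCT : 0 < upperNJ D n * T := lt_of_lt_of_le hden hmain
    have hCpos : 0 < upperNJ D n := by
      rcases hC0.lt_or_eq with h | h
      · exact h
      · exfalso; rw [← h, zero_mul] at hCT; exact lt_irrefl 0 hCT
    have : njRatio x0 y = T / (2 ^ (n - 1) * S) := by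
      unfold njRatio
      rw [← hSdef, ← hTdef]
    rw [this, div_le_div_iff₀ hCpos hden]
    calc 1 * (2 ^ (n - 1) * S) = 2 ^ (n - 1) * S := one_mul _
      _ ≤ upperNJ D n * T := hmain
      _ = T * upperNJ D n := mul_comm _ _
end

section
/- Let n ≥ 2 be an integer, 1 ≤ p ≤ 2 a real number, and k ≥ n an integer. Let ℓ_k^p denote ℝ^k equipped with the norm ‖(t_1,…,t_k)‖ = (∑_{i=1}^k |t_i|^p)^{1/p}. Then C̄_NJ^{(n)}(ℓ_k^p) = C̄_mNJ^{(n)}(ℓ_k^p) = n^{2/p − 1}. The same equalities hold for the infinite-dimensional sequence space ℓ^p of p-summable real sequences. -/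
open Finset MeasureTheory

open scoped ENNReal

set_option maxHeartbeats 1000000

lemma radem (m : ℕ) (c : ℝ) (a : Fin m → ℝ) :
    ∑ ε : Fin m → Bool, (c + ∑ j, (if ε j then (1:ℝ) else -1) * a j) ^ 2
      = 2 ^ m * (c ^ 2 + ∑ j, (a j) ^ 2) := by
  induction m generalizing c with
  | zero => simp
  | succ m ih =>
    rw [← (Fin.consEquiv (fun _ => Bool)).sum_comp]
    rw [Fintype.sum_prod_type]
    have key : ∀ (b : Bool) (ε : Fin m → Bool),
        c + ∑ j, (if Fin.consEquiv (fun _ => Bool) (b, ε) j then (1:ℝ) else -1) * a j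
          = (c + (if b then (1:ℝ) else -1) * a 0)
            + ∑ j, (if ε j then (1:ℝ) else -1) * (a ∘ Fin.succ) j := by
      intro b ε
      rw [Fin.sum_univ_succ]
      simp [Fin.consEquiv, Fin.cons_zero, Fin.cons_succ, add_assoc]
    simp_rw [key, ih]
    rw [Fintype.sum_bool]
    have : ∑ j : Fin (m+1), a j ^ 2 = a 0 ^ 2 + ∑ j : Fin m, (a ∘ Fin.succ) j ^ 2 :=
      Fin.sum_univ_succ _
    rw [this]
    simp only [if_true, if_false, Bool.false_eq_true]
    ring

lemma sum_rpow_le_rpow_sum {ι : Type*} (s : Finset ι) (f : ι → ℝ) (hf : ∀ i ∈ s, 0 ≤ f i)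
    {z : ℝ} (hz : 1 ≤ z) : ∑ i ∈ s, f i ^ z ≤ (∑ i ∈ s, f i) ^ z := by
  have hS : 0 ≤ ∑ i ∈ s, f i := Finset.sum_nonneg hf
  calc ∑ i ∈ s, f i ^ z = ∑ i ∈ s, f i ^ (z - 1) * f i := by
        refine Finset.sum_congr rfl fun i hi => ?_
        rw [← Real.rpow_add_one' (hf i hi) (by linarith), sub_add_cancel]
    _ ≤ ∑ i ∈ s, (∑ i ∈ s, f i) ^ (z - 1) * f i := by
        refine Finset.sum_le_sum fun i hi => ?_
        exact mul_le_mul_of_nonneg_right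
          (Real.rpow_le_rpow (hf i hi) (Finset.single_le_sum hf hi) (by linarith)) (hf i hi)
    _ = (∑ i ∈ s, f i) ^ (z - 1) * (∑ i ∈ s, f i) ^ (1:ℝ) := by
        rw [← Finset.mul_sum, Real.rpow_one]
    _ = (∑ i ∈ s, f i) ^ z := by
        rw [← Real.rpow_add' hS (by linarith), sub_add_cancel]

lemma rpow_sum_le_card {ι : Type*} (s : Finset ι) (f : ι → ℝ) (hf : ∀ i ∈ s, 0 ≤ f i)
    (hs : s.Nonempty) {q : ℝ} (hq : 1 ≤ q) :
    (∑ i ∈ s, f i) ^ q ≤ (s.card : ℝ) ^ (q - 1) * ∑ i ∈ s, f i ^ q := by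
  have hcard : (0:ℝ) < s.card := by exact_mod_cast Finset.card_pos.2 hs
  have h := Real.rpow_arith_mean_le_arith_mean_rpow s (fun _ => (s.card : ℝ)⁻¹) f
    (fun i _ => by positivity) (by simp [Finset.sum_const]; field_simp) (fun i hi => hf i hi) hq
  rw [← Finset.mul_sum, ← Finset.mul_sum,
    Real.mul_rpow (by positivity) (Finset.sum_nonneg hf)] at h
  have key : (s.card:ℝ) ^ q * ((s.card:ℝ)⁻¹ ^ q) = 1 := by
    rw [← Real.mul_rpow hcard.le (by positivity), mul_inv_cancel₀ hcard.ne', Real.one_rpow]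
  calc (∑ i ∈ s, f i) ^ q
      = (s.card:ℝ) ^ q * ((s.card:ℝ)⁻¹ ^ q * (∑ i ∈ s, f i) ^ q) := by
        rw [← mul_assoc, key, one_mul]
    _ ≤ (s.card:ℝ) ^ q * ((s.card:ℝ)⁻¹ * ∑ i ∈ s, f i ^ q) :=
        mul_le_mul_of_nonneg_left h (Real.rpow_nonneg hcard.le q)
    _ = (s.card:ℝ) ^ (q - 1) * ∑ i ∈ s, f i ^ q := by
        rw [← mul_assoc]
        congr 1
        rw [← Real.rpow_neg_one (s.card:ℝ), ← Real.rpow_add hcard]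
        ring_nf

lemma core {ι : Type*} (p q : ℝ) (hp1 : 1 ≤ p) (hq1 : 1 ≤ q) (hpq : p * q = 2)
    (m : ℕ) (x0 : ι → ℝ) (y : Fin m → ι → ℝ)
    (hx0 : Summable fun i => |x0 i| ^ p) (hy : ∀ j, Summable fun i => |y j i| ^ p)
    (hf : ∀ ε : Fin m → Bool,
      Summable fun i => |x0 i + ∑ j, (if ε j then (1:ℝ) else -1) * y j i| ^ p) :
    ∑ ε : Fin m → Bool, (∑' i, |x0 i + ∑ j, (if ε j then (1:ℝ) else -1) * y j i| ^ p) ^ q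
      ≤ 2 ^ m * (m + 1 : ℝ) ^ (q - 1) *
        ((∑' i, |x0 i| ^ p) ^ q + ∑ j, (∑' i, |y j i| ^ p) ^ q) := by
  have hq0 : 0 < q := by linarith
  have hp0 : 0 < p := by linarith
  set W : ι → (Fin m → Bool) → ℝ :=
    fun i ε => |x0 i + ∑ j, (if ε j then (1:ℝ) else -1) * y j i| ^ p with hW
  haveI : Fact (1 ≤ ENNReal.ofReal q) := ⟨by
    rw [← ENNReal.ofReal_one]; exact ENNReal.ofReal_le_ofReal hq1⟩
  set Q := ENNReal.ofReal q with hQ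
  have hQt : Q.toReal = q := ENNReal.toReal_ofReal hq0.le
  have hQt0 : 0 < Q.toReal := by rw [hQt]; exact hq0
  set V : ι → PiLp Q (fun _ : Fin m → Bool => ℝ) :=
    fun i => (WithLp.equiv Q _).symm (W i) with hV
  have hWnn : ∀ i ε, 0 ≤ W i ε := fun i ε => Real.rpow_nonneg (abs_nonneg _) p
  -- summability
  have hVhasSum : HasSum V ((WithLp.equiv Q _).symm (fun ε => ∑' i, W i ε)) := by
    have h1 : HasSum W (fun ε => ∑' i, W i ε) := Pi.hasSum.2 (fun ε => (hf ε).hasSum)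
    exact h1.map (PiLp.continuousLinearEquiv Q ℝ _).symm.toContinuousLinearMap
      (PiLp.continuousLinearEquiv Q ℝ _).symm.continuous
  have hVsum : Summable V := hVhasSum.summable
  have htsumV : ∑' i, V i = (WithLp.equiv Q _).symm (fun ε => ∑' i, W i ε) :=
    hVhasSum.tsum_eq
  -- rpow composition fact
  have habs : ∀ (t : ℝ), (|t| ^ p) ^ q = t ^ 2 := by
    intro t
    rw [← Real.rpow_natCast t 2]
    rw [← Real.rpow_mul (abs_nonneg t), hpq]
    rw [show ((2:ℕ):ℝ) = (2:ℝ) by norm_num]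
    rw [Real.rpow_two, Real.rpow_two, sq_abs]
  -- norm of V i
  set w : ι → ℝ := fun i => (x0 i) ^ 2 + ∑ j, (y j i) ^ 2 with hw
  have hwnn : ∀ i, 0 ≤ w i := fun i => by positivity
  have hVnorm : ∀ i, ‖V i‖ = (2 ^ m * w i) ^ q⁻¹ := by
    intro i
    rw [PiLp.norm_eq_sum hQt0]
    congr 1
    · rw [← radem m (x0 i) (fun j => y j i)]
      refine Finset.sum_congr rfl fun ε _ => ?_
      rw [hQt, Real.norm_eq_abs]
      have hVW : V i ε = W i ε := rfl
      rw [hVW, abs_of_nonneg (hWnn i ε)]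
      exact habs _
    · rw [hQt, one_div]
  -- pointwise bound on w
  set u : ι → ℝ := fun i => |x0 i| ^ p + ∑ j, |y j i| ^ p with hu
  have hunn : ∀ i, 0 ≤ u i := fun i => by positivity
  have husum : Summable u := by
    exact Summable.add hx0 (summable_sum (fun j _ => hy j))
  have hwu : ∀ i, w i ≤ u i ^ q := by
    intro i
    have h := sum_rpow_le_rpow_sum (Finset.univ : Finset (Fin (m+1)))
      (Fin.cons (|x0 i| ^ p) (fun j => |y j i| ^ p))
      (fun t _ => by
        refine Fin.cases ?_ ?_ t
        · exact Real.rpow_nonneg (abs_nonneg _) p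
        · intro j; simp only [Fin.cons_succ]; exact Real.rpow_nonneg (abs_nonneg _) p) hq1
    rw [Fin.sum_univ_succ, Fin.sum_univ_succ] at h
    simp only [Fin.cons_zero, Fin.cons_succ] at h
    simpa only [habs] using h
  have hVnorm_le : ∀ i, ‖V i‖ ≤ (2:ℝ) ^ (m / q : ℝ) * u i := by
    intro i
    rw [hVnorm i]
    have h1 : (2:ℝ) ^ m * w i ≤ 2 ^ m * u i ^ q :=
      mul_le_mul_of_nonneg_left (hwu i) (by positivity)
    calc (2 ^ m * w i) ^ q⁻¹ ≤ (2 ^ m * u i ^ q) ^ q⁻¹ :=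
          Real.rpow_le_rpow (by positivity) h1 (by positivity)
      _ = (2:ℝ) ^ (m / q : ℝ) * u i := by
          rw [Real.mul_rpow (by positivity) (Real.rpow_nonneg (hunn i) q),
            Real.rpow_rpow_inv (hunn i) hq0.ne']
          congr 1
          rw [← Real.rpow_natCast (2:ℝ) m, ← Real.rpow_mul (by norm_num)]
          rw [div_eq_mul_inv]
  have hnormsum : Summable fun i => ‖V i‖ :=
    Summable.of_nonneg_of_le (fun i => norm_nonneg _) hVnorm_le (husum.mul_left _)
  -- main chain
  have hTnn : ∀ ε, 0 ≤ ∑' i, W i ε := fun ε => tsum_nonneg (fun i => hWnn i ε)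
  have hnorm_tsum : ‖∑' i, V i‖ ^ q = ∑ ε : Fin m → Bool, (∑' i, W i ε) ^ q := by
    rw [htsumV, PiLp.norm_eq_sum hQt0, hQt, one_div,
      Real.rpow_inv_rpow (Finset.sum_nonneg fun ε _ => Real.rpow_nonneg (norm_nonneg _) q) hq0.ne']
    refine Finset.sum_congr rfl fun ε _ => ?_
    rw [Real.norm_eq_abs]
    congr 1
    exact abs_of_nonneg (hTnn ε)
  have step1 : ∑ ε : Fin m → Bool, (∑' i, W i ε) ^ q ≤ (2:ℝ) ^ m * (∑' i, u i) ^ q := by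
    rw [← hnorm_tsum]
    have h2 : ‖∑' i, V i‖ ≤ ∑' i, ‖V i‖ := norm_tsum_le_tsum_norm hnormsum
    have h3 : ∑' i, ‖V i‖ ≤ (2:ℝ) ^ (m / q : ℝ) * ∑' i, u i := by
      rw [← tsum_mul_left]
      exact hnormsum.tsum_le_tsum hVnorm_le (husum.mul_left _)
    have h4 : ‖∑' i, V i‖ ^ q ≤ ((2:ℝ) ^ (m / q : ℝ) * ∑' i, u i) ^ q :=
      Real.rpow_le_rpow (norm_nonneg _) (h2.trans h3) hq0.le
    refine h4.trans (le_of_eq ?_)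
    rw [Real.mul_rpow (by positivity) (tsum_nonneg hunn), ← Real.rpow_natCast (2:ℝ) m,
      ← Real.rpow_mul (by norm_num), div_mul_cancel₀ _ hq0.ne', Real.rpow_natCast]
  have step2 : (∑' i, u i) ^ q
      ≤ (m + 1 : ℝ) ^ (q - 1) * ((∑' i, |x0 i| ^ p) ^ q + ∑ j, (∑' i, |y j i| ^ p) ^ q) := by
    have htu : ∑' i, u i = (∑' i, |x0 i| ^ p) + ∑ j, ∑' i, |y j i| ^ p := by
      rw [hu]
      rw [hx0.tsum_add (summable_sum (fun j _ => hy j))]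
      congr 1
      exact Summable.tsum_finsetSum (fun j _ => hy j)
    have h := rpow_sum_le_card (Finset.univ : Finset (Fin (m+1)))
      (Fin.cons (∑' i, |x0 i| ^ p) (fun j => ∑' i, |y j i| ^ p))
      (fun t _ => by
        refine Fin.cases ?_ ?_ t
        · exact tsum_nonneg fun i => Real.rpow_nonneg (abs_nonneg _) p
        · intro j; simp only [Fin.cons_succ]
          exact tsum_nonneg fun i => Real.rpow_nonneg (abs_nonneg _) p)
      Finset.univ_nonempty hq1
    rw [Fin.sum_univ_succ, Fin.sum_univ_succ] at h
    simp only [Fin.cons_zero, Fin.cons_succ, Finset.card_univ, Fintype.card_fin] at h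
    rw [htu]
    exact_mod_cast h
  calc ∑ ε : Fin m → Bool, (∑' i, W i ε) ^ q ≤ (2:ℝ) ^ m * (∑' i, u i) ^ q := step1
    _ ≤ (2:ℝ) ^ m * ((m + 1 : ℝ) ^ (q - 1) *
          ((∑' i, |x0 i| ^ p) ^ q + ∑ j, (∑' i, |y j i| ^ p) ^ q)) :=
        mul_le_mul_of_nonneg_left step2 (by positivity)
    _ = _ := by ring

lemma njRatio_le_s9 {X : Type*} [NormedAddCommGroup X] [NormedSpace ℝ X] {ι : Type*}
    (p q : ℝ) (hp1 : 1 ≤ p) (hq1 : 1 ≤ q) (hpq : p * q = 2) {m : ℕ}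
    (coord : X → ι → ℝ)
    (hsum : ∀ v : X, Summable fun i => |coord v i| ^ p)
    (hnorm : ∀ v : X, ‖v‖ = (∑' i, |coord v i| ^ p) ^ (1/p))
    (x0 : X) (y : Fin m → X)
    (hcoord : ∀ (ε : Fin m → Bool) (i : ι),
      coord (x0 + ∑ j, (if ε j then (1:ℝ) else -1) • y j) i
        = coord x0 i + ∑ j, (if ε j then (1:ℝ) else -1) * coord (y j) i)
    (hD : 0 < ‖x0‖ ^ 2 + ∑ j, ‖y j‖ ^ 2) :
    njRatio x0 y ≤ (m + 1 : ℝ) ^ (q - 1) := by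
  have hp0 : 0 < p := by linarith
  have hq0 : 0 < q := by linarith
  have hqp : 1/p * (2:ℕ) = q := by field_simp; push_cast; linarith
  have hsq : ∀ v : X, ‖v‖ ^ 2 = (∑' i, |coord v i| ^ p) ^ q := by
    intro v
    rw [hnorm v, ← Real.rpow_natCast (_ ^ (1/p)) 2,
      ← Real.rpow_mul (tsum_nonneg fun i => Real.rpow_nonneg (abs_nonneg _) p), hqp]
  have hfsum : ∀ ε : Fin m → Bool,
      Summable fun i => |coord x0 i + ∑ j, (if ε j then (1:ℝ) else -1) * coord (y j) i| ^ p := by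
    intro ε
    have := hsum (x0 + ∑ j, (if ε j then (1:ℝ) else -1) • y j)
    simpa only [hcoord ε] using this
  have hc := core p q hp1 hq1 hpq m (coord x0) (fun j => coord (y j))
    (hsum x0) (fun j => hsum (y j)) hfsum
  have hnum : ∑ ε : Fin m → Bool, ‖x0 + ∑ j, (if ε j then (1:ℝ) else -1) • y j‖ ^ 2
      ≤ 2 ^ m * (m + 1 : ℝ) ^ (q - 1) * (‖x0‖ ^ 2 + ∑ j, ‖y j‖ ^ 2) := by
    calc ∑ ε : Fin m → Bool, ‖x0 + ∑ j, (if ε j then (1:ℝ) else -1) • y j‖ ^ 2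
        = ∑ ε : Fin m → Bool,
            (∑' i, |coord x0 i + ∑ j, (if ε j then (1:ℝ) else -1) * coord (y j) i| ^ p) ^ q := by
          refine Finset.sum_congr rfl fun ε _ => ?_
          rw [hsq]
          congr 1
          exact tsum_congr fun i => by rw [hcoord ε i]
      _ ≤ 2 ^ m * (m + 1 : ℝ) ^ (q - 1) *
            ((∑' i, |coord x0 i| ^ p) ^ q + ∑ j, (∑' i, |coord (y j) i| ^ p) ^ q) := hc
      _ = 2 ^ m * (m + 1 : ℝ) ^ (q - 1) * (‖x0‖ ^ 2 + ∑ j, ‖y j‖ ^ 2) := by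
          rw [hsq x0]
          congr 2
          exact Finset.sum_congr rfl fun j _ => (hsq (y j)).symm
  unfold njRatio
  rw [div_le_iff₀ (by positivity)]
  calc _ ≤ 2 ^ m * (m + 1 : ℝ) ^ (q - 1) * (‖x0‖ ^ 2 + ∑ j, ‖y j‖ ^ 2) := hnum
    _ = (m + 1 : ℝ) ^ (q - 1) * (2 ^ m * (‖x0‖ ^ 2 + ∑ j, ‖y j‖ ^ 2)) := by ring

lemma njRatio_val {X : Type*} [NormedAddCommGroup X] [NormedSpace ℝ X] {m : ℕ} (p : ℝ)
    (hp0 : 0 < p) (x0 : X) (y : Fin m → X) (hx0 : ‖x0‖ = 1) (hy : ∀ j, ‖y j‖ = 1)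
    (hnorms : ∀ ε : Fin m → Bool,
      ‖x0 + ∑ j, (if ε j then (1:ℝ) else -1) • y j‖ = (m + 1 : ℝ) ^ (1/p : ℝ)) :
    njRatio x0 y = (m + 1 : ℝ) ^ (2/p - 1) := by
  have hM : (0:ℝ) < m + 1 := by positivity
  have hcard : Fintype.card (Fin m → Bool) = 2 ^ m := by
    rw [Fintype.card_fun, Fintype.card_bool, Fintype.card_fin]
  unfold njRatio
  have hnum : ∑ ε : Fin m → Bool, ‖x0 + ∑ j, (if ε j then (1:ℝ) else -1) • y j‖ ^ 2
      = 2 ^ m * (m + 1 : ℝ) ^ (2/p : ℝ) := by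
    rw [Finset.sum_congr rfl fun ε _ => by rw [hnorms ε]]
    rw [Finset.sum_const, Finset.card_univ, hcard]
    rw [← Real.rpow_natCast ((m+1:ℝ) ^ (1/p:ℝ)) 2, ← Real.rpow_mul hM.le]
    norm_num
    ring_nf
  rw [hnum, hx0]
  rw [Finset.sum_congr rfl fun j _ => by rw [hy j]]
  rw [Finset.sum_const, Finset.card_univ, Fintype.card_fin]
  rw [one_pow, nsmul_eq_mul, mul_one]
  rw [mul_div_mul_left _ _ (by positivity : (2:ℝ)^m ≠ 0)]
  rw [Real.rpow_sub hM, Real.rpow_one]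
  congr 1
  push_cast
  ring

lemma upper_eq {X : Type*} [NormedAddCommGroup X] [NormedSpace ℝ X] (n : ℕ) (C : ℝ)
    (hb : ∀ (x0 : X) (y : Fin (n-1) → X),
      0 < ‖x0‖ ^ 2 + ∑ j, ‖y j‖ ^ 2 → njRatio x0 y ≤ C)
    (ex : ∃ (x0 : X) (y : Fin (n-1) → X),
      ‖x0‖ = 1 ∧ (∀ j, ‖y j‖ = 1) ∧ njRatio x0 y = C) :
    sSup {c : ℝ | ∃ (x0 : X) (y : Fin (n - 1) → X),
      0 < ‖x0‖ ^ 2 + ∑ j, ‖y j‖ ^ 2 ∧ c = njRatio x0 y} = C ∧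
    sSup {c : ℝ | ∃ (x0 : X) (y : Fin (n - 1) → X),
      ‖x0‖ = 1 ∧ (∀ j, ‖y j‖ = 1) ∧ c = njRatio x0 y} = C := by
  obtain ⟨x0, y, h1, h2, h3⟩ := ex
  have hDpos : 0 < ‖x0‖ ^ 2 + ∑ j, ‖y j‖ ^ 2 := by
    rw [h1]
    have : ∀ j, ‖y j‖ ^ 2 = 1 := fun j => by rw [h2 j]; norm_num
    rw [Finset.sum_congr rfl fun j _ => this j]
    positivity
  have hne1 : Set.Nonempty {c : ℝ | ∃ (x0 : X) (y : Fin (n - 1) → X),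
      0 < ‖x0‖ ^ 2 + ∑ j, ‖y j‖ ^ 2 ∧ c = njRatio x0 y} := ⟨njRatio x0 y, x0, y, hDpos, rfl⟩
  have hne2 : Set.Nonempty {c : ℝ | ∃ (x0 : X) (y : Fin (n - 1) → X),
      ‖x0‖ = 1 ∧ (∀ j, ‖y j‖ = 1) ∧ c = njRatio x0 y} := ⟨njRatio x0 y, x0, y, h1, h2, rfl⟩
  constructor
  · apply le_antisymm
    · apply csSup_le hne1
      rintro c ⟨a, b, hD, rfl⟩
      exact hb a b hD
    · apply le_csSup
      · exact ⟨C, by rintro c ⟨a, b, hD, rfl⟩; exact hb a b hD⟩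
      · exact ⟨x0, y, hDpos, h3.symm⟩
  · apply le_antisymm
    · apply csSup_le hne2
      rintro c ⟨a, b, ha, hbu, rfl⟩
      apply hb a b
      rw [ha]
      have : ∀ j, ‖b j‖ ^ 2 = 1 := fun j => by rw [hbu j]; norm_num
      rw [Finset.sum_congr rfl fun j _ => this j]
      positivity
    · apply le_csSup
      · refine ⟨C, ?_⟩
        rintro c ⟨a, b, ha, hbu, rfl⟩
        apply hb a b
        rw [ha]
        have : ∀ j, ‖b j‖ ^ 2 = 1 := fun j => by rw [hbu j]; norm_num
        rw [Finset.sum_congr rfl fun j _ => this j]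
        positivity
      · exact ⟨x0, y, h1, h2, h3.symm⟩

lemma piLp_norm_emb (P : ℝ≥0∞) [Fact (1 ≤ P)] (hP : 0 < P.toReal) {k N : ℕ}
    (e : Fin N ↪ Fin k) (c : Fin N → ℝ) (hc : ∀ t, |c t| = 1) :
    ‖∑ t : Fin N, (WithLp.equiv P (Fin k → ℝ)).symm (Pi.single (e t) (c t))‖
      = (N : ℝ) ^ (1 / P.toReal) := by
  set φ : (Fin k → ℝ) ≃ₗ[ℝ] PiLp P (fun _ : Fin k => ℝ) := (WithLp.linearEquiv P ℝ _).symm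
  set v : Fin k → ℝ := ∑ t : Fin N, Pi.single (e t) (c t) with hv
  have hxv : ∑ t : Fin N, (WithLp.equiv P (Fin k → ℝ)).symm (Pi.single (e t) (c t)) = φ v := by
    rw [hv, map_sum]
    rfl
  have hvi : ∀ i, |v i| ^ P.toReal = if i ∈ Finset.univ.map e then 1 else 0 := by
    intro i
    by_cases h : i ∈ Finset.univ.map e
    · obtain ⟨t0, -, rfl⟩ := Finset.mem_map.1 h
      have hval : v (e t0) = c t0 := by
        rw [hv, Finset.sum_apply]
        rw [Finset.sum_eq_single t0]
        · simp [Pi.single_apply]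
        · intro t _ ht
          rw [Pi.single_apply, if_neg]
          exact fun heq => ht (e.injective heq.symm)
        · simp
      rw [hval, hc t0, Real.one_rpow, if_pos h]
    · have hval : v i = 0 := by
        rw [hv, Finset.sum_apply]
        refine Finset.sum_eq_zero fun t _ => ?_
        rw [Pi.single_apply, if_neg]
        exact fun heq => h (Finset.mem_map.2 ⟨t, Finset.mem_univ t, heq.symm⟩)
      rw [hval, abs_zero, Real.zero_rpow hP.ne', if_neg h]
  rw [hxv, PiLp.norm_eq_sum hP]
  congr 1
  have : ∀ i, ‖φ v i‖ ^ P.toReal = |v i| ^ P.toReal := fun i => by rw [Real.norm_eq_abs]; rfl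
  rw [Finset.sum_congr rfl fun i _ => this i, Finset.sum_congr rfl fun i _ => hvi i]
  rw [Finset.sum_ite_mem, Finset.univ_inter, Finset.sum_const, Finset.card_map, Finset.card_univ,
    Fintype.card_fin, nsmul_eq_mul, mul_one]

lemma lp_norm_single_one (P : ℝ≥0∞) [Fact (1 ≤ P)] (hP : 0 < P.toReal) (i : ℕ) :
    ‖lp.single (E := fun _ : ℕ => ℝ) P i (1:ℝ)‖ = 1 := by
  have h := lp.norm_sum_single (E := fun _ : ℕ => ℝ) hP (fun _ => (1:ℝ)) {i}
  rw [Finset.sum_singleton, Finset.sum_singleton, norm_one, Real.one_rpow] at h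
  have := Real.rpow_rpow_inv (norm_nonneg (lp.single (E := fun _ : ℕ => ℝ) P i (1:ℝ))) hP.ne'
  rw [← this, h, Real.one_rpow]

lemma lp_norm_emb (P : ℝ≥0∞) [Fact (1 ≤ P)] (hP : 0 < P.toReal) {N : ℕ}
    (c : Fin N → ℝ) (hc : ∀ t, |c t| = 1) :
    ‖∑ t : Fin N, lp.single (E := fun _ : ℕ => ℝ) P (t : ℕ) (c t)‖
      = (N : ℝ) ^ (1 / P.toReal) := by
  set g : ℕ → ℝ := fun i => if h : i < N then c ⟨i, h⟩ else 0 with hg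
  have hsum : ∑ t : Fin N, lp.single (E := fun _ : ℕ => ℝ) P (t : ℕ) (c t)
      = ∑ i ∈ Finset.range N, lp.single (E := fun _ : ℕ => ℝ) P i (g i) := by
    rw [Finset.sum_range fun i => lp.single (E := fun _ : ℕ => ℝ) P i (g i)]
    refine Finset.sum_congr rfl fun t _ => ?_
    congr 1
    rw [hg]
    simp [t.isLt]
  have h := lp.norm_sum_single (E := fun _ : ℕ => ℝ) hP g (Finset.range N)
  have hgval : ∀ i ∈ Finset.range N, ‖g i‖ ^ P.toReal = 1 := by
    intro i hi
    rw [Finset.mem_range] at hi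
    rw [hg, Real.norm_eq_abs]
    simp only [dif_pos hi]
    rw [hc ⟨i, hi⟩, Real.one_rpow]
  rw [Finset.sum_congr rfl hgval, Finset.sum_const, Finset.card_range, nsmul_eq_mul, mul_one] at h
  rw [hsum, ← Real.rpow_rpow_inv (norm_nonneg _) hP.ne', h, one_div]

lemma piLp_result (n : ℕ) (hn : 2 ≤ n) (p : ℝ) (hp1 : 1 ≤ p) (hp2 : p ≤ 2)
    [Fact (1 ≤ ENNReal.ofReal p)] (k : ℕ) (hk : n ≤ k) :
    sSup {c : ℝ | ∃ (x0 : PiLp (ENNReal.ofReal p) (fun (_ : Fin k) => ℝ))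
        (y : Fin (n - 1) → PiLp (ENNReal.ofReal p) (fun (_ : Fin k) => ℝ)),
      0 < ‖x0‖ ^ 2 + ∑ j, ‖y j‖ ^ 2 ∧ c = njRatio x0 y} = (n : ℝ) ^ (2 / p - 1) ∧
    sSup {c : ℝ | ∃ (x0 : PiLp (ENNReal.ofReal p) (fun (_ : Fin k) => ℝ))
        (y : Fin (n - 1) → PiLp (ENNReal.ofReal p) (fun (_ : Fin k) => ℝ)),
      ‖x0‖ = 1 ∧ (∀ j, ‖y j‖ = 1) ∧ c = njRatio x0 y} = (n : ℝ) ^ (2 / p - 1) := by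
  have hp0 : 0 < p := lt_of_lt_of_le one_pos hp1
  have hPt : (ENNReal.ofReal p).toReal = p := ENNReal.toReal_ofReal hp0.le
  have hPt0 : 0 < (ENNReal.ofReal p).toReal := by rw [hPt]; exact hp0
  have hmn : n - 1 + 1 = n := by omega
  have hmnR : ((n - 1 : ℕ) : ℝ) + 1 = (n : ℝ) := by
    rw [← Nat.cast_one (R := ℝ), ← Nat.cast_add, hmn]
  have hq1 : (1:ℝ) ≤ 2/p := by rw [le_div_iff₀ hp0]; linarith
  have hpq : p * (2/p) = 2 := by field_simp
  have happly : ∀ (F : Fin (n-1) → PiLp (ENNReal.ofReal p) (fun _ : Fin k => ℝ)) (i : Fin k),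
      (∑ j, F j) i = ∑ j, F j i := by
    intro F i
    have h1 : WithLp.linearEquiv (ENNReal.ofReal p) ℝ (Fin k → ℝ) (∑ j, F j)
        = ∑ j, WithLp.linearEquiv (ENNReal.ofReal p) ℝ (Fin k → ℝ) (F j) :=
      map_sum _ F Finset.univ
    calc (∑ j, F j) i = (WithLp.linearEquiv (ENNReal.ofReal p) ℝ (Fin k → ℝ) (∑ j, F j)) i := rfl
      _ = (∑ j, WithLp.linearEquiv (ENNReal.ofReal p) ℝ (Fin k → ℝ) (F j)) i := by rw [h1]
      _ = ∑ j, F j i := by rw [Finset.sum_apply]; rfl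
  have hcoord : ∀ (x0 : PiLp (ENNReal.ofReal p) (fun _ : Fin k => ℝ))
      (y : Fin (n-1) → PiLp (ENNReal.ofReal p) (fun _ : Fin k => ℝ))
      (ε : Fin (n-1) → Bool) (i : Fin k),
      (x0 + ∑ j, (if ε j then (1:ℝ) else -1) • y j) i
        = x0 i + ∑ j, (if ε j then (1:ℝ) else -1) * y j i := by
    intro x0 y ε i
    rw [PiLp.add_apply, happly]
    exact congrArg (x0 i + ·) (Finset.sum_congr rfl fun j _ => rfl)
  have hsum : ∀ v : PiLp (ENNReal.ofReal p) (fun _ : Fin k => ℝ),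
      Summable fun i => |v i| ^ p := fun v => Summable.of_finite
  have hnorm : ∀ v : PiLp (ENNReal.ofReal p) (fun _ : Fin k => ℝ),
      ‖v‖ = (∑' i, |v i| ^ p) ^ (1/p) := by
    intro v
    rw [tsum_fintype, PiLp.norm_eq_sum hPt0, hPt]
    simp only [Real.norm_eq_abs]
  have hb : ∀ (x0 : PiLp (ENNReal.ofReal p) (fun _ : Fin k => ℝ))
      (y : Fin (n-1) → PiLp (ENNReal.ofReal p) (fun _ : Fin k => ℝ)),
      0 < ‖x0‖ ^ 2 + ∑ j, ‖y j‖ ^ 2 → njRatio x0 y ≤ (n : ℝ) ^ (2/p - 1) := by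
    intro x0 y hD
    have h := njRatio_le_s9 (X := PiLp (ENNReal.ofReal p) (fun _ : Fin k => ℝ)) (ι := Fin k) p (2/p) hp1 hq1 hpq (fun v i => v i) hsum hnorm x0 y
      (fun ε i => hcoord x0 y ε i) hD
    rwa [hmnR] at h
  -- attaining vectors
  have he2lt : ∀ t : Fin (n-1+1), (t : ℕ) < k := fun t => by have := t.isLt; omega
  set e2 : Fin (n-1+1) ↪ Fin k :=
    ⟨fun t => ⟨t.val, he2lt t⟩, fun a b h => Fin.ext (by simpa using congrArg Fin.val h)⟩ with he2
  set x0 : PiLp (ENNReal.ofReal p) (fun _ : Fin k => ℝ) :=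
    (WithLp.equiv _ _).symm (Pi.single (e2 0) 1) with hx0def
  set y : Fin (n-1) → PiLp (ENNReal.ofReal p) (fun _ : Fin k => ℝ) :=
    fun j => (WithLp.equiv _ _).symm (Pi.single (e2 j.succ) 1) with hydef
  have hx0 : ‖x0‖ = 1 := by rw [hx0def]; exact (PiLp.norm_toLp_single _ _ _ _).trans norm_one
  have hy : ∀ j, ‖y j‖ = 1 := fun j => by
    rw [hydef]; exact (PiLp.norm_toLp_single _ _ _ _).trans norm_one
  have hnorms : ∀ ε : Fin (n-1) → Bool,
      ‖x0 + ∑ j, (if ε j then (1:ℝ) else -1) • y j‖ = (((n-1 : ℕ) : ℝ) + 1) ^ (1/p : ℝ) := by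
    intro ε
    set c' : Fin (n-1+1) → ℝ := Fin.cons 1 (fun j => if ε j then (1:ℝ) else -1) with hc'
    have hrw : x0 + ∑ j, (if ε j then (1:ℝ) else -1) • y j
        = ∑ t : Fin (n-1+1),
            (WithLp.equiv (ENNReal.ofReal p) (Fin k → ℝ)).symm (Pi.single (e2 t) (c' t)) := by
      simp only [hx0def, hydef, hc', Fin.sum_univ_succ, Fin.cons_zero, Fin.cons_succ]
      congr 1
      refine Finset.sum_congr rfl fun j _ => ?_
      rw [WithLp.equiv_symm_apply, ← WithLp.toLp_smul]
      congr 1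
      rw [← Pi.single_smul, smul_eq_mul, mul_one]
    have hcabs : ∀ t, |c' t| = 1 := by
      intro t
      refine Fin.cases ?_ ?_ t
      · rw [hc', Fin.cons_zero, abs_one]
      · intro j
        rw [hc', Fin.cons_succ]
        by_cases h : ε j <;> simp [h]
    rw [hrw, piLp_norm_emb (ENNReal.ofReal p) hPt0 e2 c' hcabs, hPt]
    norm_num
  have hval : njRatio x0 y = (n : ℝ) ^ (2/p - 1) := by
    have h2 := njRatio_val p hp0 x0 y hx0 hy (by
      intro ε
      rw [hnorms ε, hmnR])
    rwa [hmnR] at h2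
  exact upper_eq n ((n : ℝ) ^ (2/p - 1)) hb ⟨x0, y, hx0, hy, hval⟩

lemma lp_result (n : ℕ) (hn : 2 ≤ n) (p : ℝ) (hp1 : 1 ≤ p) (hp2 : p ≤ 2)
    [Fact (1 ≤ ENNReal.ofReal p)] :
    sSup {c : ℝ | ∃ (x0 : lp (fun (_ : ℕ) => ℝ) (ENNReal.ofReal p))
        (y : Fin (n - 1) → lp (fun (_ : ℕ) => ℝ) (ENNReal.ofReal p)),
      0 < ‖x0‖ ^ 2 + ∑ j, ‖y j‖ ^ 2 ∧ c = njRatio x0 y} = (n : ℝ) ^ (2 / p - 1) ∧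
    sSup {c : ℝ | ∃ (x0 : lp (fun (_ : ℕ) => ℝ) (ENNReal.ofReal p))
        (y : Fin (n - 1) → lp (fun (_ : ℕ) => ℝ) (ENNReal.ofReal p)),
      ‖x0‖ = 1 ∧ (∀ j, ‖y j‖ = 1) ∧ c = njRatio x0 y} = (n : ℝ) ^ (2 / p - 1) := by
  have hp0 : 0 < p := lt_of_lt_of_le one_pos hp1
  have hPt : (ENNReal.ofReal p).toReal = p := ENNReal.toReal_ofReal hp0.le
  have hPt0 : 0 < (ENNReal.ofReal p).toReal := by rw [hPt]; exact hp0
  have hmn : n - 1 + 1 = n := by omega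
  have hmnR : ((n - 1 : ℕ) : ℝ) + 1 = (n : ℝ) := by
    rw [← Nat.cast_one (R := ℝ), ← Nat.cast_add, hmn]
  have hq1 : (1:ℝ) ≤ 2/p := by rw [le_div_iff₀ hp0]; linarith
  have hpq : p * (2/p) = 2 := by field_simp
  have hsum : ∀ v : lp (fun (_ : ℕ) => ℝ) (ENNReal.ofReal p),
      Summable fun i => |v i| ^ p := by
    intro v
    have h := (lp.memℓp v).summable hPt0
    simpa only [Real.norm_eq_abs, hPt] using h
  have hnorm : ∀ v : lp (fun (_ : ℕ) => ℝ) (ENNReal.ofReal p),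
      ‖v‖ = (∑' i, |v i| ^ p) ^ (1/p) := by
    intro v
    rw [lp.norm_eq_tsum_rpow hPt0 v]
    simp only [Real.norm_eq_abs, hPt]
  have hcoord : ∀ (x0 : lp (fun (_ : ℕ) => ℝ) (ENNReal.ofReal p))
      (y : Fin (n-1) → lp (fun (_ : ℕ) => ℝ) (ENNReal.ofReal p))
      (ε : Fin (n-1) → Bool) (i : ℕ),
      (x0 + ∑ j, (if ε j then (1:ℝ) else -1) • y j) i
        = x0 i + ∑ j, (if ε j then (1:ℝ) else -1) * y j i := by
    intro x0 y ε i
    rw [lp.coeFn_add, Pi.add_apply]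
    congr 1
    rw [lp.coeFn_sum, Finset.sum_apply]
    refine Finset.sum_congr rfl fun j _ => ?_
    rw [lp.coeFn_smul, Pi.smul_apply, smul_eq_mul]
  have hb : ∀ (x0 : lp (fun (_ : ℕ) => ℝ) (ENNReal.ofReal p))
      (y : Fin (n-1) → lp (fun (_ : ℕ) => ℝ) (ENNReal.ofReal p)),
      0 < ‖x0‖ ^ 2 + ∑ j, ‖y j‖ ^ 2 → njRatio x0 y ≤ (n : ℝ) ^ (2/p - 1) := by
    intro x0 y hD
    have h := njRatio_le_s9 (X := lp (fun (_ : ℕ) => ℝ) (ENNReal.ofReal p)) (ι := ℕ)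
      p (2/p) hp1 hq1 hpq (fun v i => v i) hsum hnorm x0 y
      (fun ε i => hcoord x0 y ε i) hD
    rwa [hmnR] at h
  set x0 : lp (fun (_ : ℕ) => ℝ) (ENNReal.ofReal p) :=
    lp.single (ENNReal.ofReal p) 0 1 with hx0def
  set y : Fin (n-1) → lp (fun (_ : ℕ) => ℝ) (ENNReal.ofReal p) :=
    fun j => lp.single (ENNReal.ofReal p) ((j : ℕ) + 1) 1 with hydef
  have hx0 : ‖x0‖ = 1 := lp_norm_single_one _ hPt0 0
  have hy : ∀ j, ‖y j‖ = 1 := fun j => lp_norm_single_one _ hPt0 _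
  have hnorms : ∀ ε : Fin (n-1) → Bool,
      ‖x0 + ∑ j, (if ε j then (1:ℝ) else -1) • y j‖ = (((n-1 : ℕ) : ℝ) + 1) ^ (1/p : ℝ) := by
    intro ε
    set c' : Fin (n-1+1) → ℝ := Fin.cons 1 (fun j => if ε j then (1:ℝ) else -1) with hc'
    have hrw : x0 + ∑ j, (if ε j then (1:ℝ) else -1) • y j
        = ∑ t : Fin (n-1+1), lp.single (ENNReal.ofReal p) (t : ℕ) (c' t) := by
      simp only [hx0def, hydef, hc', Fin.sum_univ_succ, Fin.cons_zero, Fin.cons_succ,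
        Fin.val_zero, Fin.val_succ]
      congr 1
      refine Finset.sum_congr rfl fun j _ => ?_
      rw [← lp.single_smul]
      congr 1
      rw [smul_eq_mul, mul_one]
    have hcabs : ∀ t, |c' t| = 1 := by
      intro t
      refine Fin.cases ?_ ?_ t
      · rw [hc', Fin.cons_zero, abs_one]
      · intro j
        rw [hc', Fin.cons_succ]
        by_cases h : ε j <;> simp [h]
    rw [hrw, lp_norm_emb (ENNReal.ofReal p) hPt0 c' hcabs, hPt]
    norm_num
  have hval : njRatio x0 y = (n : ℝ) ^ (2/p - 1) := by
    have h2 := njRatio_val p hp0 x0 y hx0 hy (by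
      intro ε
      rw [hnorms ε, hmnR])
    rwa [hmnR] at h2
  exact upper_eq n ((n : ℝ) ^ (2/p - 1)) hb ⟨x0, y, hx0, hy, hval⟩

theorem stmt_9 (n : ℕ) (hn : 2 ≤ n) (p : ℝ) (hp1 : 1 ≤ p) (hp2 : p ≤ 2)
    [Fact (1 ≤ ENNReal.ofReal p)] (k : ℕ) (hk : n ≤ k) :
    upperNJ (PiLp (ENNReal.ofReal p) (fun (_ : Fin k) => ℝ)) n = (n : ℝ) ^ (2 / p - 1) ∧
    upperMNJ (PiLp (ENNReal.ofReal p) (fun (_ : Fin k) => ℝ)) n = (n : ℝ) ^ (2 / p - 1) ∧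
    upperNJ (lp (fun (_ : ℕ) => ℝ) (ENNReal.ofReal p)) n = (n : ℝ) ^ (2 / p - 1) ∧
    upperMNJ (lp (fun (_ : ℕ) => ℝ) (ENNReal.ofReal p)) n = (n : ℝ) ^ (2 / p - 1) := by
  obtain ⟨h1, h2⟩ := piLp_result n hn p hp1 hp2 k hk
  obtain ⟨h3, h4⟩ := lp_result n hn p hp1 hp2
  exact ⟨h1, h2, h3, h4⟩
end

section
/- Let n ≥ 2 be an integer and let k ≥ n be an integer. Let ℓ_k^∞ denote ℝ^k equipped with the supremum norm ‖(t_1,…,t_k)‖ = max_{1 ≤ i ≤ k} |t_i|. Then C̲_NJ^{(n)}(ℓ_k^∞) = C̲_mNJ^{(n)}(ℓ_k^∞) = 1/n. The same equalities hold for the infinite-dimensional space ℓ^∞ of bounded real sequences. -/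
open Finset MeasureTheory

/-! ### auxiliary lemmas -/

lemma aux_pair_sum {ι : Type*} [Fintype ι] (f : ι → ℝ) (hf : ∀ i, 0 ≤ f i)
    (σ : Equiv.Perm ι) {c : ℝ} (hc : 0 ≤ c) (h : ∀ i, 2 * c ≤ f i + f (σ i)) :
    (Fintype.card ι : ℝ) * c ^ 2 ≤ ∑ i, f i ^ 2 := by
  have key : ∀ i : ι, 2 * c ^ 2 ≤ f i ^ 2 + f (σ i) ^ 2 := fun i => by
    nlinarith [h i, hf i, hf (σ i), sq_nonneg (f i - f (σ i))]
  have h1 : ∑ _i : ι, (2 * c ^ 2) ≤ ∑ i, (f i ^ 2 + f (σ i) ^ 2) :=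
    Finset.sum_le_sum fun i _ => key i
  rw [Finset.sum_add_distrib, Equiv.sum_comp σ (fun i => f i ^ 2), Finset.sum_const,
    Finset.card_univ, nsmul_eq_mul] at h1
  linarith

lemma aux_ratio_ge {X : Type*} [NormedAddCommGroup X] [NormedSpace ℝ X] {m : ℕ}
    (x0 : X) (y : Fin m → X) (hD : 0 < ‖x0‖ ^ 2 + ∑ j, ‖y j‖ ^ 2) :
    1 / ((m : ℝ) + 1) ≤ njRatio x0 y := by
  have hcard : ((Fintype.card (Fin m → Bool)) : ℝ) = 2 ^ m := by simp
  have hx0 : (2:ℝ) ^ m * ‖x0‖ ^ 2 ≤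
      ∑ ε : Fin m → Bool, ‖x0 + ∑ j, (if ε j then (1 : ℝ) else -1) • y j‖ ^ 2 := by
    have inv1 : Function.Involutive (fun ε : Fin m → Bool => fun j => !(ε j)) := by
      intro ε; funext j; simp
    set σ1 : Equiv.Perm (Fin m → Bool) := inv1.toPerm with hσ1
    rw [← hcard]
    refine aux_pair_sum _ (fun ε => norm_nonneg _) σ1 (norm_nonneg _) (fun ε => ?_)
    have hvneg : (∑ j, (if (σ1 ε) j then (1 : ℝ) else -1) • y j)
        = - ∑ j, (if ε j then (1 : ℝ) else -1) • y j := by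
      rw [← Finset.sum_neg_distrib]
      refine Finset.sum_congr rfl fun j _ => ?_
      have h1 : σ1 ε j = !(ε j) := rfl
      rw [h1]
      cases ε j <;> simp
    calc 2 * ‖x0‖
        = ‖(x0 + ∑ j, (if ε j then (1 : ℝ) else -1) • y j)
            + (x0 + ∑ j, (if (σ1 ε) j then (1 : ℝ) else -1) • y j)‖ := by
          rw [hvneg, show (x0 + ∑ j, (if ε j then (1 : ℝ) else -1) • y j)
              + (x0 + -∑ j, (if ε j then (1 : ℝ) else -1) • y j) = (2:ℝ) • x0 by module,
            norm_smul]
          simp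
      _ ≤ _ + _ := norm_add_le _ _
  have hyj : ∀ j0 : Fin m, (2:ℝ) ^ m * ‖y j0‖ ^ 2 ≤
      ∑ ε : Fin m → Bool, ‖x0 + ∑ j, (if ε j then (1 : ℝ) else -1) • y j‖ ^ 2 := by
    intro j0
    have inv2 : Function.Involutive
        (fun ε : Fin m → Bool => Function.update ε j0 (!(ε j0))) := by
      intro ε; funext j
      rcases eq_or_ne j j0 with rfl | hj
      · simp
      · simp [Function.update_of_ne hj]
    set σ2 : Equiv.Perm (Fin m → Bool) := inv2.toPerm with hσ2
    rw [← hcard]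
    refine aux_pair_sum _ (fun ε => norm_nonneg _) σ2 (norm_nonneg _) (fun ε => ?_)
    have hvdiff : (∑ j, (if ε j then (1 : ℝ) else -1) • y j)
        - (∑ j, (if (σ2 ε) j then (1 : ℝ) else -1) • y j)
        = ((if ε j0 then (1:ℝ) else -1) - (if !(ε j0) then (1:ℝ) else -1)) • y j0 := by
      rw [← Finset.sum_sub_distrib]
      simp only [← sub_smul]
      rw [Finset.sum_eq_single j0]
      · have h1 : σ2 ε j0 = !(ε j0) := by
          show Function.update ε j0 (!(ε j0)) j0 = _
          rw [Function.update_self]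
        rw [h1]
      · intro j _ hj
        have h1 : σ2 ε j = ε j := by
          show Function.update ε j0 (!(ε j0)) j = _
          rw [Function.update_of_ne hj]
        rw [h1, sub_self, zero_smul]
      · simp
    have hnd : ‖(∑ j, (if ε j then (1 : ℝ) else -1) • y j)
        - (∑ j, (if (σ2 ε) j then (1 : ℝ) else -1) • y j)‖ = 2 * ‖y j0‖ := by
      rw [hvdiff, norm_smul]
      cases h : ε j0 <;> simp <;> norm_num
    calc 2 * ‖y j0‖
        = ‖(x0 + ∑ j, (if ε j then (1 : ℝ) else -1) • y j)
            - (x0 + ∑ j, (if (σ2 ε) j then (1 : ℝ) else -1) • y j)‖ := by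
          rw [show (x0 + ∑ j, (if ε j then (1 : ℝ) else -1) • y j)
              - (x0 + ∑ j, (if (σ2 ε) j then (1 : ℝ) else -1) • y j)
              = (∑ j, (if ε j then (1 : ℝ) else -1) • y j)
              - (∑ j, (if (σ2 ε) j then (1 : ℝ) else -1) • y j) by abel, hnd]
      _ ≤ _ + _ := norm_sub_le _ _
  have hsum : (2:ℝ) ^ m * (∑ j, ‖y j‖ ^ 2) ≤
      (m : ℝ) * ∑ ε : Fin m → Bool, ‖x0 + ∑ j, (if ε j then (1 : ℝ) else -1) • y j‖ ^ 2 := by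
    calc (2:ℝ) ^ m * (∑ j, ‖y j‖ ^ 2)
        = ∑ j : Fin m, (2:ℝ) ^ m * ‖y j‖ ^ 2 := by rw [Finset.mul_sum]
      _ ≤ ∑ _j : Fin m, ∑ ε : Fin m → Bool,
            ‖x0 + ∑ j, (if ε j then (1 : ℝ) else -1) • y j‖ ^ 2 :=
          Finset.sum_le_sum fun j _ => hyj j
      _ = _ := by rw [Finset.sum_const, Finset.card_univ, Fintype.card_fin, nsmul_eq_mul]
  unfold njRatio
  rw [div_le_div_iff₀ (by positivity) (by positivity)]
  nlinarith [hx0, hsum]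

lemma aux_ratio_eq {X : Type*} [NormedAddCommGroup X] [NormedSpace ℝ X] {m : ℕ}
    (x0 : X) (y : Fin m → X) (h0 : ‖x0‖ = 1) (hy : ∀ j, ‖y j‖ = 1)
    (hall : ∀ ε : Fin m → Bool, ‖x0 + ∑ j, (if ε j then (1 : ℝ) else -1) • y j‖ = 1) :
    njRatio x0 y = 1 / ((m : ℝ) + 1) := by
  have hnum : (∑ ε : Fin m → Bool, ‖x0 + ∑ j, (if ε j then (1 : ℝ) else -1) • y j‖ ^ 2)
      = (2:ℝ) ^ m := by
    calc (∑ ε : Fin m → Bool, ‖x0 + ∑ j, (if ε j then (1 : ℝ) else -1) • y j‖ ^ 2)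
        = ∑ _ε : Fin m → Bool, (1:ℝ) := Finset.sum_congr rfl fun ε _ => by rw [hall ε, one_pow]
      _ = (2:ℝ) ^ m := by simp
  have hden : (∑ j, ‖y j‖ ^ 2) = (m : ℝ) := by
    calc (∑ j, ‖y j‖ ^ 2) = ∑ _j : Fin m, (1:ℝ) :=
          Finset.sum_congr rfl fun j _ => by rw [hy j, one_pow]
      _ = (m : ℝ) := by simp
  unfold njRatio
  rw [hnum, hden, h0, one_pow]
  rw [div_eq_div_iff (by positivity) (by positivity)]
  ring

/-- key general lemma -/
lemma aux_main {X : Type*} [NormedAddCommGroup X] [NormedSpace ℝ X] (n : ℕ) (hn : 2 ≤ n)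
    (x0 : X) (y : Fin (n - 1) → X) (h0 : ‖x0‖ = 1) (hy : ∀ j, ‖y j‖ = 1)
    (hall : ∀ ε : Fin (n - 1) → Bool,
      ‖x0 + ∑ j, (if ε j then (1 : ℝ) else -1) • y j‖ = 1) :
    lowerNJ X n = 1 / (n : ℝ) ∧ lowerMNJ X n = 1 / (n : ℝ) := by
  have hm : ((n - 1 : ℕ) : ℝ) + 1 = (n : ℝ) := by
    have h1 : 1 ≤ n := le_trans one_le_two hn
    rw [Nat.cast_sub h1]; push_cast; ring
  have hDpos : (0:ℝ) < ‖x0‖ ^ 2 + ∑ j, ‖y j‖ ^ 2 := by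
    rw [h0]
    have : (0:ℝ) ≤ ∑ j, ‖y j‖ ^ 2 := Finset.sum_nonneg fun j _ => sq_nonneg _
    nlinarith
  have hrat : njRatio x0 y = 1 / (n : ℝ) := by
    rw [aux_ratio_eq x0 y h0 hy hall, hm]
  constructor
  · unfold lowerNJ
    have hbdd : ∀ c ∈ {c : ℝ | ∃ (a : X) (b : Fin (n - 1) → X),
        0 < ‖a‖ ^ 2 + ∑ j, ‖b j‖ ^ 2 ∧ c = njRatio a b}, 1 / (n : ℝ) ≤ c := by
      rintro c ⟨a, b, hab, rfl⟩
      rw [← hm]; exact aux_ratio_ge a b hab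
    have hmem : (1 / (n : ℝ)) ∈ {c : ℝ | ∃ (a : X) (b : Fin (n - 1) → X),
        0 < ‖a‖ ^ 2 + ∑ j, ‖b j‖ ^ 2 ∧ c = njRatio a b} := ⟨x0, y, hDpos, hrat.symm⟩
    exact le_antisymm (csInf_le ⟨1 / (n : ℝ), hbdd⟩ hmem) (le_csInf ⟨_, hmem⟩ hbdd)
  · unfold lowerMNJ
    have hbdd : ∀ c ∈ {c : ℝ | ∃ (a : X) (b : Fin (n - 1) → X),
        ‖a‖ = 1 ∧ (∀ j, ‖b j‖ = 1) ∧ c = njRatio a b}, 1 / (n : ℝ) ≤ c := by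
      rintro c ⟨a, b, ha, hb, rfl⟩
      have hp : (0:ℝ) < ‖a‖ ^ 2 + ∑ j, ‖b j‖ ^ 2 := by
        rw [ha]
        have : (0:ℝ) ≤ ∑ j, ‖b j‖ ^ 2 := Finset.sum_nonneg fun j _ => sq_nonneg _
        nlinarith
      rw [← hm]; exact aux_ratio_ge a b hp
    have hmem : (1 / (n : ℝ)) ∈ {c : ℝ | ∃ (a : X) (b : Fin (n - 1) → X),
        ‖a‖ = 1 ∧ (∀ j, ‖b j‖ = 1) ∧ c = njRatio a b} := ⟨x0, y, h0, hy, hrat.symm⟩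
    exact le_antisymm (csInf_le ⟨1 / (n : ℝ), hbdd⟩ hmem) (le_csInf ⟨_, hmem⟩ hbdd)

/-! ### coordinate computations -/

lemma aux_sum_ite_zero {m : ℕ} (c : Fin m → ℝ) :
    ∑ j : Fin m, c j * (if (0:ℕ) = (j:ℕ) + 1 then (1:ℝ) else 0) = 0 := by
  refine Finset.sum_eq_zero fun j _ => ?_
  rw [if_neg (by omega), mul_zero]

lemma aux_sum_ite_bound {m : ℕ} (c : Fin m → ℝ) (hc : ∀ j, |c j| ≤ 1) (t : ℕ) :
    |∑ j : Fin m, c j * (if t = (j:ℕ) + 1 then (1:ℝ) else 0)| ≤ 1 := by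
  by_cases h : ∃ j0 : Fin m, t = (j0:ℕ) + 1
  · obtain ⟨j0, hj0⟩ := h
    rw [Finset.sum_eq_single j0]
    · rw [if_pos hj0, mul_one]; exact hc j0
    · intro j _ hj
      rw [if_neg, mul_zero]
      intro hcon; exact hj (Fin.ext (by omega))
    · simp
  · rw [Finset.sum_eq_zero, abs_zero]
    · norm_num
    · intro j _; rw [if_neg (fun hcon => h ⟨j, hcon⟩), mul_zero]

lemma aux_coord_abs_le {m : ℕ} (c : Fin m → ℝ) (hc : ∀ j, |c j| ≤ 1) (t : ℕ) :
    |(if t = 0 then (1:ℝ) else 0) + ∑ j : Fin m, c j * (if t = (j:ℕ) + 1 then (1:ℝ) else 0)| ≤ 1 := by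
  rcases eq_or_ne t 0 with rfl | ht
  · rw [if_pos rfl, aux_sum_ite_zero, add_zero]; norm_num
  · rw [if_neg ht, zero_add]; exact aux_sum_ite_bound c hc t

lemma aux_coord_zero {m : ℕ} (c : Fin m → ℝ) :
    (if (0:ℕ) = 0 then (1:ℝ) else 0)
      + ∑ j : Fin m, c j * (if (0:ℕ) = (j:ℕ) + 1 then (1:ℝ) else 0) = 1 := by
  rw [if_pos rfl, aux_sum_ite_zero, add_zero]

theorem stmt_11 (n : ℕ) (hn : 2 ≤ n) (k : ℕ) (hk : n ≤ k) :
    lowerNJ (PiLp ⊤ (fun (_ : Fin k) => ℝ)) n = 1 / (n : ℝ) ∧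
    lowerMNJ (PiLp ⊤ (fun (_ : Fin k) => ℝ)) n = 1 / (n : ℝ) ∧
    lowerNJ (lp (fun (_ : ℕ) => ℝ) ⊤) n = 1 / (n : ℝ) ∧
    lowerMNJ (lp (fun (_ : ℕ) => ℝ) ⊤) n = 1 / (n : ℝ) := by
  have hk0 : 0 < k := by omega
  have hPi : lowerNJ (PiLp ⊤ (fun (_ : Fin k) => ℝ)) n = 1 / (n : ℝ) ∧
      lowerMNJ (PiLp ⊤ (fun (_ : Fin k) => ℝ)) n = 1 / (n : ℝ) := by
    have hne : Nonempty (Fin k) := ⟨⟨0, hk0⟩⟩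
    have hnorm : ∀ (w : PiLp ⊤ (fun (_ : Fin k) => ℝ)) (i0 : Fin k),
        (∀ i : Fin k, |w i| ≤ 1) → w i0 = 1 → ‖w‖ = 1 := by
      intro w i0 hle hone
      rw [PiLp.norm_eq_ciSup]
      apply le_antisymm
      · exact ciSup_le fun i => by rw [Real.norm_eq_abs]; exact hle i
      · have := le_ciSup (f := fun i : Fin k => ‖w i‖) (Finite.bddAbove_range _) i0
        rwa [Real.norm_eq_abs, hone, abs_one] at this
    let vec : ℕ → PiLp ⊤ (fun (_ : Fin k) => ℝ) := fun t =>
      (WithLp.equiv ⊤ (∀ _ : Fin k, ℝ)).symm (fun i => if (i : ℕ) = t then 1 else 0)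
    have hvapp : ∀ (t : ℕ) (i : Fin k), vec t i = if (i : ℕ) = t then 1 else 0 :=
      fun _ _ => rfl
    have hvnorm : ∀ t : ℕ, t < k → ‖vec t‖ = 1 := by
      intro t ht
      refine hnorm (vec t) ⟨t, ht⟩ (fun i => ?_) ?_
      · rw [hvapp]; split_ifs <;> norm_num
      · rw [hvapp]; simp
    have happ : ∀ (ε : Fin (n - 1) → Bool) (i : Fin k),
        (vec 0 + ∑ j : Fin (n - 1), (if ε j then (1 : ℝ) else -1) • vec ((j : ℕ) + 1)) i
        = (if (i : ℕ) = 0 then (1:ℝ) else 0)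
          + ∑ j : Fin (n - 1), (if ε j then (1 : ℝ) else -1)
              * (if (i : ℕ) = (j : ℕ) + 1 then (1:ℝ) else 0) := by
      intro ε i
      have h1 : (∑ j : Fin (n - 1), (if ε j then (1 : ℝ) else -1) • vec ((j : ℕ) + 1)) i
          = ∑ j : Fin (n - 1), ((if ε j then (1 : ℝ) else -1) • vec ((j : ℕ) + 1)) i :=
        by rw [WithLp.ofLp_sum, Finset.sum_apply]
      calc (vec 0 + ∑ j : Fin (n - 1), (if ε j then (1 : ℝ) else -1) • vec ((j : ℕ) + 1)) i
          = vec 0 i + (∑ j : Fin (n - 1), (if ε j then (1 : ℝ) else -1) • vec ((j : ℕ) + 1)) i :=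
            rfl
        _ = vec 0 i + ∑ j : Fin (n - 1), ((if ε j then (1 : ℝ) else -1) • vec ((j : ℕ) + 1)) i := by
            rw [h1]
        _ = _ := rfl
    have hall : ∀ ε : Fin (n - 1) → Bool,
        ‖vec 0 + ∑ j : Fin (n - 1), (if ε j then (1 : ℝ) else -1) • vec ((j : ℕ) + 1)‖ = 1 := by
      intro ε
      refine hnorm _ ⟨0, hk0⟩ (fun i => ?_) ?_
      · rw [happ ε i]
        exact aux_coord_abs_le _ (fun j => by split_ifs <;> norm_num) _
      · rw [happ ε ⟨0, hk0⟩]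
        exact aux_coord_zero _
    exact aux_main n hn (vec 0) (fun j => vec ((j : ℕ) + 1)) (hvnorm 0 hk0)
      (fun j => hvnorm ((j : ℕ) + 1) (by have := j.isLt; omega)) hall
  have hlp : lowerNJ (lp (fun (_ : ℕ) => ℝ) ⊤) n = 1 / (n : ℝ) ∧
      lowerMNJ (lp (fun (_ : ℕ) => ℝ) ⊤) n = 1 / (n : ℝ) := by
    have hnorm : ∀ (w : lp (fun (_ : ℕ) => ℝ) ⊤) (i0 : ℕ),
        (∀ i : ℕ, |w i| ≤ 1) → w i0 = 1 → ‖w‖ = 1 := by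
      intro w i0 hle hone
      rw [lp.norm_eq_ciSup]
      apply le_antisymm
      · exact ciSup_le fun i => by simpa [Real.norm_eq_abs] using hle i
      · have hb : BddAbove (Set.range fun i : ℕ => ‖w i‖) := by
          refine ⟨1, ?_⟩
          rintro _ ⟨i, rfl⟩
          simpa [Real.norm_eq_abs] using hle i
        have := le_ciSup (f := fun i : ℕ => ‖w i‖) hb i0
        simpa [hone] using this
    let vec : ℕ → lp (fun (_ : ℕ) => ℝ) ⊤ := fun t => lp.single ⊤ t (1:ℝ)
    have hvapp : ∀ (t : ℕ) (i : ℕ), vec t i = if i = t then (1:ℝ) else 0 := by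
      intro t i
      rcases eq_or_ne i t with rfl | h
      · rw [if_pos rfl]; exact lp.single_apply_self (E := fun _ : ℕ => ℝ) ⊤ i (1:ℝ)
      · rw [if_neg h]; exact lp.single_apply_ne (E := fun _ : ℕ => ℝ) ⊤ t (1:ℝ) h
    have hvnorm : ∀ t : ℕ, ‖vec t‖ = 1 := by
      intro t
      refine hnorm (vec t) t (fun i => ?_) ?_
      · rw [hvapp]; split_ifs <;> norm_num
      · rw [hvapp, if_pos rfl]
    have happ : ∀ (ε : Fin (n - 1) → Bool) (i : ℕ),
        (vec 0 + ∑ j : Fin (n - 1), (if ε j then (1 : ℝ) else -1) • vec ((j : ℕ) + 1)) i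
        = (if i = 0 then (1:ℝ) else 0)
          + ∑ j : Fin (n - 1), (if ε j then (1 : ℝ) else -1)
              * (if i = (j : ℕ) + 1 then (1:ℝ) else 0) := by
      intro ε i
      simp only [lp.coeFn_add, Pi.add_apply, lp.coeFn_sum, Finset.sum_apply, lp.coeFn_smul,
        Pi.smul_apply, smul_eq_mul, hvapp]
    have hall : ∀ ε : Fin (n - 1) → Bool,
        ‖vec 0 + ∑ j : Fin (n - 1), (if ε j then (1 : ℝ) else -1) • vec ((j : ℕ) + 1)‖ = 1 := by
      intro ε
      refine hnorm _ 0 (fun i => ?_) ?_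
      · rw [happ ε i]
        exact aux_coord_abs_le _ (fun j => by split_ifs <;> norm_num) _
      · rw [happ ε 0]
        exact aux_coord_zero _
    exact aux_main n hn (vec 0) (fun j => vec ((j : ℕ) + 1)) (hvnorm 0)
      (fun j => hvnorm ((j : ℕ) + 1)) hall
  exact ⟨hPi.1, hPi.2, hlp.1, hlp.2⟩
end
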